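/- arXiv:1612.06767 — 7 statements merged into one kernel-verified Lean document; each statement's English description precedes it below -/
import Mathlib

section
/- For convex bodies K, C in R^n, the Minkowski asymmetries satisfy max{s(K), s(C)} ≤ R(K,C)/r(K,-C), where s(K) = R(-K,K). -/
open Pointwise

/-- A convex body: compact, convex, with nonempty interior. -/
def IsBody {n : ℕ} (K : Set (Fin n → ℝ)) : Prop :=
  Convex ℝ K ∧ IsCompact K ∧ (interior K).Nonempty

/-- Circumradius of `K` w.r.t. `C`: smallest `ρ > 0` with `K` contained in a translate of `ρ • C`. -/
noncomputable def circR {n : ℕ} (K C : Set (Fin n → ℝ)) : ℝ :=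
  sInf {ρ : ℝ | 0 < ρ ∧ ∃ t : Fin n → ℝ, K ⊆ t +ᵥ ρ • C}

/-- Inradius of `K` w.r.t. `C`: largest `ρ ≥ 0` with a translate of `ρ • C` inside `K`. -/
noncomputable def inrad {n : ℕ} (K C : Set (Fin n → ℝ)) : ℝ :=
  sSup {ρ : ℝ | 0 ≤ ρ ∧ ∃ t : Fin n → ℝ, t +ᵥ ρ • C ⊆ K}

/-- Minkowski asymmetry `s(K) = R(-K, K)`. -/
noncomputable def asym {n : ℕ} (K : Set (Fin n → ℝ)) : ℝ := circR (-K) K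

/-- Diameter of `K` w.r.t. `C`: twice the maximal circumradius of a segment with endpoints in `K`. -/
noncomputable def diamC {n : ℕ} (K C : Set (Fin n → ℝ)) : ℝ :=
  sSup {d : ℝ | ∃ x ∈ K, ∃ y ∈ K, d = 2 * circR (segment ℝ x y) C}

/-- `K` is (diametrically) complete w.r.t. `C`. -/
def IsDiamComplete {n : ℕ} (K C : Set (Fin n → ℝ)) : Prop :=
  ∀ K' : Set (Fin n → ℝ), IsBody K' → K ⊂ K' → diamC K C < diamC K' C

/-- `S` is an `n`-simplex: convex hull of `n+1` affinely independent points. -/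
def IsSimplexBody {n : ℕ} (S : Set (Fin n → ℝ)) : Prop :=
  ∃ p : Fin (n + 1) → (Fin n → ℝ), AffineIndependent ℝ p ∧ S = convexHull ℝ (Set.range p)

/-- Support function of `C`. -/
noncomputable def supp {n : ℕ} (C : Set (Fin n → ℝ)) (a : Fin n → ℝ) : ℝ :=
  sSup {r : ℝ | ∃ x ∈ C, r = dotProduct a x}

/-- `A ⊆ₜ B`: `A` is contained in some translate of `B`. -/
def SubsetT {n : ℕ} (A B : Set (Fin n → ℝ)) : Prop := ∃ t : Fin n → ℝ, A ⊆ t +ᵥ B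



section MyAux
variable {n : ℕ}

lemma my_circR_nonneg (K C : Set (Fin n → ℝ)) : 0 ≤ sInf {ρ : ℝ | 0 < ρ ∧ ∃ t : Fin n → ℝ, K ⊆ t +ᵥ ρ • C} :=
  Real.sInf_nonneg (fun _ hx => hx.1.le)

lemma my_circR_le {K C : Set (Fin n → ℝ)} {ρ : ℝ} (hρ : 0 < ρ) (t : Fin n → ℝ)
    (h : K ⊆ t +ᵥ ρ • C) :
    sInf {ρ : ℝ | 0 < ρ ∧ ∃ t : Fin n → ℝ, K ⊆ t +ᵥ ρ • C} ≤ ρ :=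
  csInf_le ⟨0, fun _ hx => hx.1.le⟩ ⟨hρ, t, h⟩

lemma my_asymK_le {K C : Set (Fin n → ℝ)} {ρ σ : ℝ} {t t' : Fin n → ℝ}
    (hρ : 0 < ρ) (hσ : 0 < σ)
    (hKC : K ⊆ t +ᵥ ρ • C) (hCK : t' +ᵥ σ • (-C) ⊆ K) :
    sInf {a : ℝ | 0 < a ∧ ∃ u : Fin n → ℝ, -K ⊆ u +ᵥ a • K} ≤ ρ / σ := by
  apply my_circR_le (div_pos hρ hσ) (-t - (ρ / σ) • t')
  intro x hx
  have hxK : -x ∈ K := hx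
  obtain ⟨b, hb, hbx⟩ := Set.mem_vadd_set.1 (hKC hxK)
  obtain ⟨c, hc, hcb⟩ := Set.mem_smul_set.1 hb
  have hk : t' + σ • (-c) ∈ K := by
    apply hCK
    exact Set.vadd_mem_vadd_set (Set.smul_mem_smul_set (Set.neg_mem_neg.2 hc))
  refine Set.mem_vadd_set.2 ⟨(ρ / σ) • (t' + σ • (-c)), Set.smul_mem_smul_set hk, ?_⟩
  have hbx' : t + ρ • c = -x := by rw [← hcb] at hbx; exact hbx
  have hx' : x = -(t + ρ • c) := by rw [hbx']; simp
  have hρσ : ρ / σ * σ = ρ := div_mul_cancel₀ ρ hσ.ne'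
  rw [vadd_eq_add, hx', smul_add, smul_smul, hρσ, smul_neg]
  abel

lemma my_asymC_le {K C : Set (Fin n → ℝ)} {ρ σ : ℝ} {t t' : Fin n → ℝ}
    (hρ : 0 < ρ) (hσ : 0 < σ)
    (hKC : K ⊆ t +ᵥ ρ • C) (hCK : t' +ᵥ σ • (-C) ⊆ K) :
    sInf {a : ℝ | 0 < a ∧ ∃ u : Fin n → ℝ, -C ⊆ u +ᵥ a • C} ≤ ρ / σ := by
  apply my_circR_le (div_pos hρ hσ) ((1 / σ) • (t - t'))
  intro x hx
  have hk : t' + σ • x ∈ K := hCK (Set.vadd_mem_vadd_set (Set.smul_mem_smul_set hx))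
  obtain ⟨b, hb, hbx⟩ := Set.mem_vadd_set.1 (hKC hk)
  obtain ⟨c, hc, hcb⟩ := Set.mem_smul_set.1 hb
  refine Set.mem_vadd_set.2 ⟨(ρ / σ) • c, Set.smul_mem_smul_set hc, ?_⟩
  have key : t' + σ • x = t + ρ • c := by rw [← hcb] at hbx; exact hbx.symm
  have : σ • ((1 / σ) • (t - t') +ᵥ (ρ / σ) • c) = σ • x := by
    rw [vadd_eq_add, smul_add, smul_smul, smul_smul,
      mul_one_div_cancel hσ.ne', mul_div_cancel₀ ρ hσ.ne', one_smul]
    have : σ • x = (t + ρ • c) - t' := by rw [← key]; abel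
    rw [this]; abel
  exact smul_right_injective (Fin n → ℝ) hσ.ne' this

lemma my_exists_outer {K C : Set (Fin n → ℝ)} (hK : IsCompact K) (hC : (interior C).Nonempty) :
    ∃ ρ > (0:ℝ), ∃ t : Fin n → ℝ, K ⊆ t +ᵥ ρ • C := by
  obtain ⟨x, hx⟩ := hC
  obtain ⟨ε, hε, hball⟩ := Metric.isOpen_iff.1 isOpen_interior x hx
  obtain ⟨M, hM⟩ := hK.isBounded.exists_norm_le
  set M' : ℝ := max M 0 with hM'
  have hM'0 : 0 ≤ M' := le_max_right _ _
  set ρ : ℝ := (M' + 1) / ε with hρdef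
  have hρ : 0 < ρ := div_pos (by linarith) hε
  refine ⟨ρ, hρ, -(ρ • x), fun y hy => ?_⟩
  refine Set.mem_vadd_set.2 ⟨ρ • (x + ρ⁻¹ • y), Set.smul_mem_smul_set ?_, ?_⟩
  · apply interior_subset; apply hball
    rw [Metric.mem_ball, dist_eq_norm]
    have : x + ρ⁻¹ • y - x = ρ⁻¹ • y := by abel
    rw [this, norm_smul, norm_inv, Real.norm_of_nonneg hρ.le]
    have hyM : ‖y‖ ≤ M' := le_trans (hM y hy) (le_max_left _ _)
    have : ρ⁻¹ * ‖y‖ ≤ ρ⁻¹ * M' := by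
      apply mul_le_mul_of_nonneg_left hyM (inv_nonneg.2 hρ.le)
    refine lt_of_le_of_lt this ?_
    rw [hρdef, inv_div, div_mul_eq_mul_div, div_lt_iff₀ (by linarith)]
    nlinarith
  · rw [vadd_eq_add, smul_add, smul_smul, mul_inv_cancel₀ hρ.ne', one_smul]
    abel

lemma my_exists_inner {K C : Set (Fin n → ℝ)} (hK : (interior K).Nonempty) (hC : IsCompact C) :
    ∃ σ > (0:ℝ), ∃ t : Fin n → ℝ, t +ᵥ σ • (-C) ⊆ K := by
  obtain ⟨y, hy⟩ := hK
  obtain ⟨δ, hδ, hball⟩ := Metric.isOpen_iff.1 isOpen_interior y hy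
  obtain ⟨N, hN⟩ := hC.isBounded.exists_norm_le
  set N' : ℝ := max N 1 with hN'
  have hN'1 : 1 ≤ N' := le_max_right _ _
  have hN'0 : 0 < N' := by linarith
  set σ : ℝ := δ / (2 * N') with hσdef
  have hσ : 0 < σ := div_pos hδ (by linarith)
  refine ⟨σ, hσ, y, fun z hz => ?_⟩
  obtain ⟨b, hb, hbz⟩ := Set.mem_vadd_set.1 hz
  obtain ⟨c, hc, hcb⟩ := Set.mem_smul_set.1 hb
  apply interior_subset (hball _)
  rw [Metric.mem_ball, dist_eq_norm, ← hbz, ← hcb, vadd_eq_add]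
  have : y + σ • c - y = σ • c := by abel
  rw [this, norm_smul, Real.norm_of_nonneg hσ.le]
  have hcN : ‖c‖ ≤ N' := by
    have := hN (-c) (Set.mem_neg.1 hc)
    rw [norm_neg] at this
    exact le_trans this (le_max_left _ _)
  calc σ * ‖c‖ ≤ σ * N' := mul_le_mul_of_nonneg_left hcN hσ.le
    _ = δ / 2 := by rw [hσdef]; field_simp
    _ < δ := by linarith

lemma my_main_aux {K C : Set (Fin n → ℝ)} (a : ℝ) (ha : 0 ≤ a)
    (hR : ∃ ρ > (0:ℝ), ∃ t : Fin n → ℝ, K ⊆ t +ᵥ ρ • C)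
    (hr : ∃ σ > (0:ℝ), ∃ t : Fin n → ℝ, t +ᵥ σ • (-C) ⊆ K)
    (key : ∀ ρ σ : ℝ, 0 < ρ → 0 < σ → ∀ t t' : Fin n → ℝ,
      K ⊆ t +ᵥ ρ • C → t' +ᵥ σ • (-C) ⊆ K → a ≤ ρ / σ) :
    a ≤ sInf {ρ : ℝ | 0 < ρ ∧ ∃ t : Fin n → ℝ, K ⊆ t +ᵥ ρ • C} /
        sSup {σ : ℝ | 0 ≤ σ ∧ ∃ t : Fin n → ℝ, t +ᵥ σ • (-C) ⊆ K} := by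
  set SR := {ρ : ℝ | 0 < ρ ∧ ∃ t : Fin n → ℝ, K ⊆ t +ᵥ ρ • C} with hSR
  set Sr := {σ : ℝ | 0 ≤ σ ∧ ∃ t : Fin n → ℝ, t +ᵥ σ • (-C) ⊆ K} with hSr
  obtain ⟨ρ0, hρ0, t0, ht0⟩ := hR
  obtain ⟨σ0, hσ0, t0', ht0'⟩ := hr
  have hSRne : SR.Nonempty := ⟨ρ0, hρ0, t0, ht0⟩
  have hRnn : 0 ≤ sInf SR := Real.sInf_nonneg (fun _ hx => hx.1.le)
  have key2 : ∀ σ ∈ Sr, 0 < σ → a * σ ≤ sInf SR := by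
    intro σ hσmem hσ
    obtain ⟨_, t', ht'⟩ := hσmem
    apply le_csInf hSRne
    intro ρ hρmem
    obtain ⟨hρ, t, ht⟩ := hρmem
    have := key ρ σ hρ hσ t t' ht ht'
    calc a * σ ≤ ρ / σ * σ := mul_le_mul_of_nonneg_right this hσ.le
      _ = ρ := div_mul_cancel₀ ρ hσ.ne'
  rcases ha.lt_or_eq with hapos | haz
  · -- a > 0
    by_cases hbdd : BddAbove Sr
    · have hσ0mem : σ0 ∈ Sr := ⟨hσ0.le, t0', ht0'⟩
      have hrpos : 0 < sSup Sr := lt_of_lt_of_le hσ0 (le_csSup hbdd hσ0mem)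
      rw [le_div_iff₀ hrpos, mul_comm]
      have : sSup Sr ≤ sInf SR / a := by
        apply csSup_le ⟨σ0, hσ0mem⟩
        intro σ hσmem
        rcases hσmem.1.lt_or_eq with hσ | hσ
        · rw [le_div_iff₀ hapos, mul_comm]
          exact key2 σ hσmem hσ
        · rw [← hσ]; exact div_nonneg hRnn hapos.le
      calc sSup Sr * a ≤ sInf SR / a * a := mul_le_mul_of_nonneg_right this hapos.le
        _ = sInf SR := div_mul_cancel₀ _ hapos.ne'
    · exfalso
      apply hbdd
      refine ⟨max (sInf SR / a) 0, fun σ hσmem => ?_⟩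
      rcases hσmem.1.lt_or_eq with hσ | hσ
      · refine le_trans ?_ (le_max_left _ _)
        rw [le_div_iff₀ hapos, mul_comm]
        exact key2 σ hσmem hσ
      · rw [← hσ]; exact le_max_right _ _
  · rw [← haz]
    apply div_nonneg hRnn
    exact Real.sSup_nonneg (fun _ hx => hx.1)

end MyAux

theorem stmt0 {n : ℕ} (K C : Set (Fin n → ℝ)) (hK : IsBody K) (hC : IsBody C) :
    max (asym K) (asym C) ≤ circR K C / inrad K (-C) := by
  obtain ⟨-, hKcp, hKi⟩ := hK
  obtain ⟨-, hCcp, hCi⟩ := hC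
  have hR := my_exists_outer hKcp hCi
  have hr := my_exists_inner hKi hCcp
  unfold asym circR inrad
  apply max_le
  · exact my_main_aux _ (my_circR_nonneg (-K) K) hR hr
      (fun ρ σ hρ hσ t t' h1 h2 => my_asymK_le hρ hσ h1 h2)
  · exact my_main_aux _ (my_circR_nonneg (-C) C) hR hr
      (fun ρ σ hρ hσ t t' h1 h2 => my_asymC_le hρ hσ h1 h2)
end

section
/- For convex bodies K, C in R^n, (s(C)+1)/s(C) ≤ R(K,C)/R(K,C−C) ≤ s(C)+1, where C−C is the difference body. -/
open Pointwise

namespace Stmt1Aux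

open Pointwise Metric Bornology Set

variable {n : ℕ}

/-- The set whose infimum is `circR`. -/
def SR (K C : Set (Fin n → ℝ)) : Set ℝ :=
  {ρ : ℝ | 0 < ρ ∧ ∃ t : Fin n → ℝ, K ⊆ t +ᵥ ρ • C}

lemma circR_eq_sInf_SR (K C : Set (Fin n → ℝ)) : circR K C = sInf (SR K C) := rfl

lemma SR_bddBelow (K C : Set (Fin n → ℝ)) : BddBelow (SR K C) :=
  ⟨0, fun _ hρ => hρ.1.le⟩

lemma mem_trans_smul {A : Set (Fin n → ℝ)} {t x : Fin n → ℝ} {ρ : ℝ} :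
    x ∈ t +ᵥ ρ • A ↔ ∃ a ∈ A, x = t + ρ • a := by
  constructor
  · intro hx
    rw [Set.mem_vadd_set] at hx
    obtain ⟨y, hy, rfl⟩ := hx
    obtain ⟨a, ha, rfl⟩ := hy
    exact ⟨a, ha, rfl⟩
  · rintro ⟨a, ha, rfl⟩
    exact Set.vadd_mem_vadd_set (Set.smul_mem_smul_set ha)

lemma SR_nonempty {K C : Set (Fin n → ℝ)} (hK : IsBounded K)
    {c : Fin n → ℝ} {ε : ℝ} (hε : 0 < ε) (hball : ball c ε ⊆ C) :
    (SR K C).Nonempty := by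
  obtain ⟨R, hR⟩ := hK.subset_closedBall 0
  set ρ := (|R| + 1) / ε with hρdef
  have hρ : 0 < ρ := div_pos (by positivity) hε
  refine ⟨ρ, hρ, -(ρ • c), ?_⟩
  intro x hx
  rw [Set.mem_vadd_set_iff_neg_vadd_mem]
  refine smul_set_mono hball ?_
  rw [_root_.smul_ball hρ.ne']
  have hx' : x ∈ closedBall (0 : Fin n → ℝ) R := hR hx
  have hxR : ‖x‖ ≤ R := by simpa [dist_eq_norm] using hx'
  simp only [vadd_eq_add, neg_neg, mem_ball]
  rw [dist_eq_norm]
  have h1 : ρ • c + x - ρ • c = x := by abel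
  have h2 : ρ * ε = |R| + 1 := div_mul_cancel₀ _ hε.ne'
  rw [h1, Real.norm_eq_abs ρ, abs_of_pos hρ, h2]
  calc ‖x‖ ≤ R := hxR
    _ ≤ |R| := le_abs_self R
    _ < |R| + 1 := by linarith

lemma SR_lb (hn : 0 < n) {K C : Set (Fin n → ℝ)}
    {x : Fin n → ℝ} {r : ℝ} (hr : 0 < r) (hball : ball x r ⊆ K)
    (hC : IsBounded C) :
    ∀ ρ ∈ SR K C, r / 2 / (diam C + 1) ≤ ρ := by
  haveI : Nonempty (Fin n) := ⟨⟨0, hn⟩⟩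
  rintro ρ ⟨hρ, t, hsub⟩
  set e : Fin n → ℝ := fun _ => (1 : ℝ) with he
  have hne : ‖e‖ = 1 := by
    rw [he, pi_norm_const]; simp
  have hy : x + (r/2) • e ∈ ball x r := by
    rw [mem_ball]
    have : dist (x + (r/2) • e) x = r/2 := by
      simp [dist_eq_norm, add_sub_cancel_left, norm_smul, hne,
        abs_of_pos (by linarith : (0:ℝ) < r/2), abs_of_pos hr]
    rw [this]; linarith
  have hx0 : x ∈ ball x r := mem_ball_self hr
  have hdiam : diam (t +ᵥ ρ • C) ≤ ρ * diam C := by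
    apply diam_le_of_forall_dist_le (by positivity)
    rintro a ha b hb
    rw [Set.mem_vadd_set] at ha hb
    obtain ⟨a', ha', rfl⟩ := ha
    obtain ⟨b', hb', rfl⟩ := hb
    obtain ⟨a'', ha'', rfl⟩ := ha'
    obtain ⟨b'', hb'', rfl⟩ := hb'
    have : dist (t +ᵥ ρ • a'') (t +ᵥ ρ • b'') = ρ * dist a'' b'' := by
      simp only [vadd_eq_add, dist_add_left, dist_smul₀, Real.norm_eq_abs, abs_of_pos hρ]
    rw [this]
    exact mul_le_mul_of_nonneg_left (dist_le_diam_of_mem hC ha'' hb'') hρ.le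
  have hKb : IsBounded (t +ᵥ ρ • C) := (hC.smul₀ ρ).vadd t
  have h2 : r / 2 ≤ ρ * diam C := by
    have hmem := dist_le_diam_of_mem hKb (hsub (hball hy)) (hsub (hball hx0))
    have hd : dist (x + (r/2) • e) x = r/2 := by
      simp [dist_eq_norm, add_sub_cancel_left, norm_smul, hne,
        abs_of_pos (by linarith : (0:ℝ) < r/2), abs_of_pos hr]
    calc r/2 = dist (x + (r/2)•e) x := hd.symm
      _ ≤ diam (t +ᵥ ρ • C) := hmem
      _ ≤ ρ * diam C := hdiam
  rw [div_le_iff₀ (by positivity)]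
  have h3 : ρ * diam C ≤ ρ * (diam C + 1) := by nlinarith [diam_nonneg (s := C)]
  linarith

lemma circR_pos (hn : 0 < n) {K C : Set (Fin n → ℝ)}
    {x : Fin n → ℝ} {r : ℝ} (hr : 0 < r) (hball : ball x r ⊆ K)
    (hC : IsBounded C) (hne : (SR K C).Nonempty) :
    0 < circR K C := by
  have h1 : r / 2 / (diam C + 1) ≤ circR K C := by
    rw [circR_eq_sInf_SR]
    exact le_csInf hne (SR_lb hn hr hball hC)
  have h2 : 0 < r / 2 / (diam C + 1) := by
    have := diam_nonneg (s := C); positivity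
  linarith

lemma circR_scale {K C₁ C₂ : Set (Fin n → ℝ)} {t₀ : Fin n → ℝ} {μ : ℝ} (hμ : 0 < μ)
    (hsub : C₁ ⊆ t₀ +ᵥ μ • C₂) (hne : (SR K C₁).Nonempty) :
    circR K C₂ ≤ μ * circR K C₁ := by
  have key : ∀ ρ ∈ SR K C₁, circR K C₂ ≤ μ * ρ := by
    rintro ρ ⟨hρ, t, ht⟩
    have hmem : μ * ρ ∈ SR K C₂ := by
      refine ⟨by positivity, t + ρ • t₀, ?_⟩
      intro x hx
      obtain ⟨c₁, hc₁, rfl⟩ := mem_trans_smul.mp (ht hx)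
      obtain ⟨c₂, hc₂, rfl⟩ := mem_trans_smul.mp (hsub hc₁)
      refine mem_trans_smul.mpr ⟨c₂, hc₂, ?_⟩
      rw [smul_add, smul_smul, mul_comm μ ρ]
      abel
    rw [circR_eq_sInf_SR]
    exact csInf_le (SR_bddBelow K C₂) hmem
  have h2 : circR K C₂ / μ ≤ circR K C₁ := by
    rw [circR_eq_sInf_SR K C₁]
    apply le_csInf hne
    intro ρ hρ
    rw [div_le_iff₀ hμ, mul_comm]
    exact key ρ hρ
  rwa [div_le_iff₀ hμ, mul_comm] at h2

lemma convex_sub_dilate {C : Set (Fin n → ℝ)} (hC : Convex ℝ C) {c₀ : Fin n → ℝ}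
    (hc₀ : c₀ ∈ C) {μ : ℝ} (hμ : 1 ≤ μ) : C ⊆ ((1 - μ) • c₀) +ᵥ μ • C := by
  intro x hx
  have hμ0 : (0:ℝ) < μ := lt_of_lt_of_le one_pos hμ
  refine mem_trans_smul.mpr ⟨(1/μ) • x + ((μ-1)/μ) • c₀, ?_, ?_⟩
  · exact hC hx hc₀ (by positivity) (div_nonneg (by linarith) hμ0.le) (by field_simp; ring)
  · rw [smul_add, smul_smul, smul_smul]
    rw [mul_one_div_cancel hμ0.ne', mul_div_cancel₀ _ hμ0.ne']
    module

lemma diff_sub_dilate {C : Set (Fin n → ℝ)} (hC : Convex ℝ C) {u : Fin n → ℝ}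
    {σ : ℝ} (hσ : 0 < σ) (h : -C ⊆ u +ᵥ σ • C) :
    C - C ⊆ u +ᵥ (σ + 1) • C := by
  rintro x hx
  rw [Set.mem_sub] at hx
  obtain ⟨a, ha, b, hb, rfl⟩ := hx
  have hnb : -b ∈ -C := Set.neg_mem_neg.mpr hb
  obtain ⟨c, hc, hcb⟩ := mem_trans_smul.mp (h hnb)
  refine mem_trans_smul.mpr ⟨(1/(σ+1)) • a + (σ/(σ+1)) • c, ?_, ?_⟩
  · exact hC ha hc (by positivity) (by positivity) (by field_simp; ring)
  · have hσ1 : (0:ℝ) < σ + 1 := by linarith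
    rw [smul_add, smul_smul, smul_smul, mul_one_div_cancel hσ1.ne',
      mul_div_cancel₀ _ hσ1.ne', one_smul]
    have hab : a - b = a + (u + σ • c) := by rw [← hcb]; abel
    rw [hab]; abel

lemma sub_diff_dilate {C : Set (Fin n → ℝ)} {u : Fin n → ℝ}
    {σ : ℝ} (hσ : 0 < σ) (h : -C ⊆ u +ᵥ σ • C) :
    C ⊆ (-((σ+1)⁻¹ • u)) +ᵥ (σ/(σ+1)) • (C - C) := by
  intro x hx
  have hnx : -x ∈ -C := Set.neg_mem_neg.mpr hx
  obtain ⟨c, hc, hcx⟩ := mem_trans_smul.mp (h hnx)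
  refine mem_trans_smul.mpr ⟨x - c, Set.sub_mem_sub hx hc, ?_⟩
  have hσ1 : (0:ℝ) < σ + 1 := by linarith
  have hcval : c = σ⁻¹ • (-x - u) := by
    have hc' : σ • c = -x - u := by rw [hcx]; abel
    rw [← hc', inv_smul_smul₀ hσ.ne']
  rw [hcval]
  match_scalars <;> (field_simp; try ring)

lemma asym_approx {C : Set (Fin n → ℝ)} (hC : Convex ℝ C) {c₀ : Fin n → ℝ}
    (hc₀ : c₀ ∈ C) (hS : (SR (-C) C).Nonempty) {ε : ℝ} (hε : 0 < ε) :
    ∃ u : Fin n → ℝ, -C ⊆ u +ᵥ (asym C + ε) • C := by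
  have hlt : sInf (SR (-C) C) < asym C + ε := by
    rw [asym, circR_eq_sInf_SR]; linarith
  obtain ⟨ρ, hρS, hρlt⟩ := exists_lt_of_csInf_lt hS hlt
  obtain ⟨hρ, t, ht⟩ := hρS
  set μ : ℝ := (asym C + ε) / ρ with hμdef
  have hμ1 : 1 ≤ μ := (one_le_div hρ).mpr hρlt.le
  have hμρ : ρ * μ = asym C + ε := by
    rw [hμdef, mul_div_cancel₀ _ hρ.ne']
  refine ⟨t + ρ • ((1 - μ) • c₀), ?_⟩
  intro x hx
  obtain ⟨c₁, hc₁, rfl⟩ := mem_trans_smul.mp (ht hx)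
  obtain ⟨c₂, hc₂, hc₂eq⟩ := mem_trans_smul.mp (convex_sub_dilate hC hc₀ hμ1 hc₁)
  refine mem_trans_smul.mpr ⟨c₂, hc₂, ?_⟩
  rw [hc₂eq, ← hμρ, smul_add, smul_smul, smul_smul]
  abel

lemma sub_trans_diff {C : Set (Fin n → ℝ)} {c₀ : Fin n → ℝ} (hc₀ : c₀ ∈ C) :
    C ⊆ c₀ +ᵥ (1:ℝ) • (C - C) := by
  intro x hx
  exact mem_trans_smul.mpr ⟨x - c₀, Set.sub_mem_sub hx hc₀, by rw [one_smul]; abel⟩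

lemma circR_zero_of_subsingleton {K C : Set (Fin 0 → ℝ)} (hC : C.Nonempty) :
    circR K C = 0 := by
  haveI : Subsingleton (Fin 0 → ℝ) := ⟨fun a b => funext fun i => i.elim0⟩
  obtain ⟨c, hc⟩ := hC
  have hset : {ρ : ℝ | 0 < ρ ∧ ∃ t : Fin 0 → ℝ, K ⊆ t +ᵥ ρ • C} = Ioi 0 := by
    ext ρ
    simp only [mem_setOf_eq, mem_Ioi]
    refine ⟨fun h => h.1, fun h => ⟨h, 0, fun x _ => ?_⟩⟩
    have hmem : (0 : Fin 0 → ℝ) + ρ • c ∈ (0 : Fin 0 → ℝ) +ᵥ ρ • C :=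
      Set.vadd_mem_vadd_set (Set.smul_mem_smul_set hc)
    rwa [Subsingleton.elim x ((0 : Fin 0 → ℝ) + ρ • c)]
  rw [circR, hset]
  exact csInf_Ioi

end Stmt1Aux

open Stmt1Aux Metric Bornology in
theorem stmt1 {n : ℕ} (K C : Set (Fin n → ℝ)) (hK : IsBody K) (hC : IsBody C) :
    (asym C + 1) / asym C ≤ circR K C / circR K (C - C) ∧
    circR K C / circR K (C - C) ≤ asym C + 1 := by
  obtain ⟨hKconv, hKcomp, hKint⟩ := hK
  obtain ⟨hCconv, hCcomp, hCint⟩ := hC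
  rcases Nat.eq_zero_or_pos n with hn | hn
  · subst hn
    have hCne : C.Nonempty := hCint.mono interior_subset
    have hKne : K.Nonempty := hKint.mono interior_subset
    have h1 : circR K C = 0 := circR_zero_of_subsingleton hCne
    have h2 : circR K (C - C) = 0 := by
      obtain ⟨c, hc⟩ := hCne
      exact circR_zero_of_subsingleton ⟨c - c, Set.sub_mem_sub hc hc⟩
    have h3 : asym C = 0 := circR_zero_of_subsingleton hCne
    rw [h1, h2, h3]
    norm_num
  · -- balls inside K, C, -C, C - C
    obtain ⟨xK, hxK⟩ := hKint
    obtain ⟨rK, hrK, hballK'⟩ := Metric.isOpen_iff.mp isOpen_interior xK hxK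
    have hballK : ball xK rK ⊆ K := hballK'.trans interior_subset
    obtain ⟨c, hcint⟩ := hCint
    obtain ⟨rC, hrC, hballC'⟩ := Metric.isOpen_iff.mp isOpen_interior c hcint
    have hballC : ball c rC ⊆ C := hballC'.trans interior_subset
    have hc : c ∈ C := interior_subset hcint
    have hballnC : ball (-c) rC ⊆ -C := by
      intro y hy
      rw [Set.mem_neg]
      apply hballC
      rw [mem_ball] at hy ⊢
      calc dist (-y) c = ‖-y - c‖ := dist_eq_norm _ _
        _ = ‖-(y - -c)‖ := by congr 1; abel
        _ = ‖y - -c‖ := norm_neg _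
        _ = dist y (-c) := (dist_eq_norm _ _).symm
        _ < rC := hy
    have hballD : ball (0 : Fin n → ℝ) rC ⊆ C - C := by
      intro y hy
      have h1 : y + c ∈ ball c rC := by
        rw [mem_ball] at hy ⊢
        have hyc : y + c - c = y := by abel
        simpa [dist_eq_norm, hyc] using hy
      have h2 : y + c ∈ C := hballC h1
      exact ⟨y + c, h2, c, hc, add_sub_cancel_right y c⟩
    -- boundedness
    have hKb : IsBounded K := hKcomp.isBounded
    have hCb : IsBounded C := hCcomp.isBounded
    have hnCb : IsBounded (-C) := hCb.neg
    have hDb : IsBounded (C - C) := hCb.sub hCb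
    -- nonemptiness of the SR sets
    have hS1 : (SR K C).Nonempty := SR_nonempty hKb hrC hballC
    have hS2 : (SR K (C - C)).Nonempty := SR_nonempty hKb hrC hballD
    have hSs : (SR (-C) C).Nonempty := SR_nonempty hnCb hrC hballC
    -- positivity
    have hR1 : 0 < circR K C := circR_pos hn hrK hballK hCb hS1
    have hR2 : 0 < circR K (C - C) := circR_pos hn hrK hballK hDb hS2
    have hs : 0 < asym C := circR_pos hn hrC hballnC hCb hSs
    set s := asym C
    set R1 := circR K C with hR1def
    set R2 := circR K (C - C) with hR2def
    -- R2 ≤ R1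
    have hR21 : R2 ≤ R1 := by
      have := circR_scale (K := K) one_pos (sub_trans_diff hc) hS1
      rwa [one_mul] at this
    -- upper bound : R1 ≤ (s+1) R2
    have hupper : R1 ≤ (s + 1) * R2 := by
      rw [← sub_nonpos]
      rw [sub_nonpos]
      apply le_of_forall_pos_le_add
      intro ε' hε'
      set ε : ℝ := ε' / R2 with hεdef
      have hε : 0 < ε := div_pos hε' hR2
      obtain ⟨u, hu⟩ := asym_approx hCconv hc hSs hε
      have hsub : C - C ⊆ u +ᵥ (s + ε + 1) • C := diff_sub_dilate hCconv (by positivity) hu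
      have hkey : R1 ≤ (s + ε + 1) * R2 := by
        have := circR_scale (K := K) (by positivity) hsub hS2
        linarith [this]
      have hεR2 : ε * R2 = ε' := by
        rw [hεdef, div_mul_cancel₀ _ hR2.ne']
      nlinarith [hkey, hεR2]
    -- lower bound : (s+1) R2 ≤ s R1
    have hlower : (s + 1) * R2 ≤ s * R1 := by
      apply le_of_forall_pos_le_add
      intro ε' hε'
      set ε : ℝ := ε' / R1 with hεdef
      have hε : 0 < ε := div_pos hε' hR1
      obtain ⟨u, hu⟩ := asym_approx hCconv hc hSs hε
      have hσ : (0:ℝ) < s + ε := by positivity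
      have hsub := sub_diff_dilate hσ hu
      have hkey : R2 ≤ ((s + ε) / (s + ε + 1)) * R1 :=
        circR_scale (div_pos hσ (by linarith)) hsub hS1
      have hkey2 : R2 * (s + ε + 1) ≤ (s + ε) * R1 := by
        rw [div_mul_eq_mul_div, le_div_iff₀ (by linarith : (0:ℝ) < s + ε + 1)] at hkey
        linarith
      have hεR1 : ε * R1 = ε' := by
        rw [hεdef, div_mul_cancel₀ _ hR1.ne']
      nlinarith [hkey2, hεR1, hR2.le, hR21]
    constructor
    · rw [div_le_div_iff₀ hs hR2]
      linarith [hlower]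
    · rw [div_le_iff₀ hR2]
      linarith [hupper]
end

section
/- For convex bodies K, C in R^n, (s(C)+1)/s(C) ≤ r(K,C)/r(K,C−C) ≤ s(C)+1. -/
open Pointwise

namespace Stmt2Aux

variable {n : ℕ}

lemma vadd_eq_singleton_add (t : Fin n → ℝ) (A : Set (Fin n → ℝ)) :
    t +ᵥ A = {t} + A := by
  rw [Set.singleton_add]
  rfl

/-- The inradius set. -/
def inradSet (K C : Set (Fin n → ℝ)) : Set ℝ :=
  {ρ : ℝ | 0 ≤ ρ ∧ ∃ t : Fin n → ℝ, t +ᵥ ρ • C ⊆ K}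

lemma inrad_eq (K C : Set (Fin n → ℝ)) : inrad K C = sSup (inradSet K C) := rfl

/-- The circumradius set. -/
def circSet (K C : Set (Fin n → ℝ)) : Set ℝ :=
  {ρ : ℝ | 0 < ρ ∧ ∃ t : Fin n → ℝ, K ⊆ t +ᵥ ρ • C}

lemma circR_eq (K C : Set (Fin n → ℝ)) : circR K C = sInf (circSet K C) := rfl

lemma inradSet_bddAbove {K C : Set (Fin n → ℝ)} (hKb : Bornology.IsBounded K)
    {c₁ c₂ : Fin n → ℝ} (h₁ : c₁ ∈ C) (h₂ : c₂ ∈ C) (hne : c₁ ≠ c₂) :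
    BddAbove (inradSet K C) := by
  refine ⟨Metric.diam K / dist c₁ c₂, ?_⟩
  rintro ρ ⟨hρ, t, ht⟩
  have hd : 0 < dist c₁ c₂ := dist_pos.2 hne
  rw [le_div_iff₀ hd]
  have hm₁ : t + ρ • c₁ ∈ K := ht ⟨ρ • c₁, Set.smul_mem_smul_set h₁, rfl⟩
  have hm₂ : t + ρ • c₂ ∈ K := ht ⟨ρ • c₂, Set.smul_mem_smul_set h₂, rfl⟩
  have := Metric.dist_le_diam_of_mem hKb hm₁ hm₂
  calc ρ * dist c₁ c₂ = dist (t + ρ • c₁) (t + ρ • c₂) := by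
        rw [dist_add_left, dist_smul₀, Real.norm_eq_abs, abs_of_nonneg hρ]
    _ ≤ Metric.diam K := this

lemma inradSet_pos {K C : Set (Fin n → ℝ)} (hKi : (interior K).Nonempty)
    (hCb : Bornology.IsBounded C) : ∃ ρ > 0, ρ ∈ inradSet K C := by
  obtain ⟨y, hy⟩ := hKi
  obtain ⟨ε, hε, hball⟩ := Metric.isOpen_iff.1 isOpen_interior y hy
  obtain ⟨r, hr⟩ := hCb.subset_closedBall 0
  set R : ℝ := max r 1 with hR
  have hR1 : (0:ℝ) < R := lt_of_lt_of_le one_pos (le_max_right _ _)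
  refine ⟨ε / (2 * R), by positivity, le_of_lt (by positivity), y, ?_⟩
  rintro x ⟨z, ⟨c, hc, rfl⟩, rfl⟩
  have hcR : ‖c‖ ≤ R := le_trans (mem_closedBall_zero_iff.1 (hr hc)) (le_max_left _ _)
  have hz : ‖(ε / (2 * R)) • c‖ < ε := by
    rw [norm_smul, Real.norm_eq_abs, abs_of_pos (by positivity)]
    calc ε / (2 * R) * ‖c‖ ≤ ε / (2 * R) * R := by
          exact mul_le_mul_of_nonneg_left hcR (by positivity)
      _ = ε / 2 := by field_simp
      _ < ε := by linarith
  have : y +ᵥ (ε / (2 * R)) • c ∈ Metric.ball y ε := by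
    simp only [vadd_eq_add, Metric.mem_ball, dist_eq_norm]
    simpa using hz
  exact interior_subset (hball this)


lemma sub_eq_add_neg_set (C : Set (Fin n → ℝ)) : C - C = C + (-C) := by
  ext z
  simp only [Set.mem_sub, Set.mem_add, Set.mem_neg]
  constructor
  · rintro ⟨a, ha, b, hb, rfl⟩
    exact ⟨a, ha, -b, by simpa using hb, by ring⟩
  · rintro ⟨a, ha, b, hb, rfl⟩
    exact ⟨a, ha, -b, hb, by ring⟩

lemma circSet_nonempty {C : Set (Fin n → ℝ)} (hCb : Bornology.IsBounded C)
    (hCi : (interior C).Nonempty) : (circSet (-C) C).Nonempty := by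
  obtain ⟨y, hy⟩ := hCi
  obtain ⟨ε, hε, hball⟩ := Metric.isOpen_iff.1 isOpen_interior y hy
  obtain ⟨r, hr⟩ := hCb.subset_closedBall 0
  set R : ℝ := max r 1 with hR
  have hR1 : (0:ℝ) < R := lt_of_lt_of_le one_pos (le_max_right _ _)
  set ρ : ℝ := (R + 1) / (ε / 2) with hρdef
  have hρ0 : 0 < ρ := by positivity
  refine ⟨ρ, hρ0, -(ρ • y), ?_⟩
  intro z hz
  have hzR : ‖z‖ ≤ R := by
    have h1 : -z ∈ C := by simpa using hz
    have h2 := mem_closedBall_zero_iff.1 (hr h1)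
    calc ‖z‖ = ‖-z‖ := (norm_neg z).symm
      _ ≤ r := h2
      _ ≤ R := le_max_left _ _
  refine ⟨ρ • (y + ρ⁻¹ • z), Set.smul_mem_smul_set ?_, ?_⟩
  · apply interior_subset
    apply hball
    simp only [Metric.mem_ball, dist_eq_norm]
    have h3 : ‖y + ρ⁻¹ • z - y‖ = ρ⁻¹ * ‖z‖ := by
      rw [add_sub_cancel_left, norm_smul, Real.norm_eq_abs, abs_of_pos (by positivity)]
    rw [h3]
    calc ρ⁻¹ * ‖z‖ ≤ ρ⁻¹ * R := mul_le_mul_of_nonneg_left hzR (by positivity)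
      _ = R * (ε/2) / (R + 1) := by rw [hρdef]; field_simp
      _ < ε := by
          rw [div_lt_iff₀ (by linarith)]
          nlinarith
  · show -(ρ • y) +ᵥ ρ • (y + ρ⁻¹ • z) = z
    rw [vadd_eq_add, smul_add, smul_smul, mul_inv_cancel₀ hρ0.ne', one_smul]
    abel

lemma mem_AD {K C : Set (Fin n → ℝ)} (hCc : Convex ℝ C) {ρ : ℝ}
    (hρ : ρ ∈ circSet (-C) C) {μ : ℝ} (hμ : μ ∈ inradSet K C) :
    μ / (ρ + 1) ∈ inradSet K (C - C) := by
  obtain ⟨hρ0, t, ht⟩ := hρ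
  obtain ⟨hμ0, x, hx⟩ := hμ
  rw [vadd_eq_singleton_add] at ht hx
  have hρ1 : (0:ℝ) < ρ + 1 := by linarith
  set lam := μ / (ρ + 1) with hl
  have hlam0 : 0 ≤ lam := div_nonneg hμ0 hρ1.le
  refine ⟨hlam0, x - lam • t, ?_⟩
  rw [vadd_eq_singleton_add]
  have hCC : C - C ⊆ {t} + (ρ + 1) • C := by
    rw [sub_eq_add_neg_set]
    calc C + (-C) ⊆ C + ({t} + ρ • C) := Set.add_subset_add_left ht
      _ = {t} + (C + ρ • C) := by
          rw [← add_assoc, add_comm C ({t} : Set (Fin n → ℝ)), add_assoc]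
      _ = {t} + (ρ + 1) • C := by
          rw [hCc.add_smul hρ0.le zero_le_one, one_smul, add_comm C (ρ • C)]
  calc {x - lam • t} + lam • (C - C)
      ⊆ {x - lam • t} + lam • ({t} + (ρ + 1) • C) :=
        Set.add_subset_add_left (Set.smul_set_mono hCC)
    _ = {x - lam • t} + ({lam • t} + (lam * (ρ + 1)) • C) := by
        rw [smul_add, Set.smul_set_singleton, smul_smul]
    _ = {x} + μ • C := by
        have hlm : lam * (ρ + 1) = μ := by rw [hl]; field_simp
        rw [← add_assoc, Set.singleton_add_singleton, hlm, sub_add_cancel]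
    _ ⊆ K := hx

lemma mem_A {K C : Set (Fin n → ℝ)} (hCc : Convex ℝ C) {ρ : ℝ}
    (hρ : ρ ∈ circSet (-C) C) {μ : ℝ} (hμ : μ ∈ inradSet K (C - C)) :
    μ * (ρ + 1) / ρ ∈ inradSet K C := by
  obtain ⟨hρ0, t, ht⟩ := hρ
  obtain ⟨hμ0, x, hx⟩ := hμ
  rw [vadd_eq_singleton_add] at ht hx
  have hinv0 : (0:ℝ) ≤ ρ⁻¹ := by positivity
  have hCneg : C ⊆ {-t} + ρ • (-C) := by
    have h0 : - -C ⊆ -({t} + ρ • C) := Set.neg_subset_neg.2 ht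
    rw [neg_neg] at h0
    refine h0.trans ?_
    rw [neg_add_rev, add_comm, Set.neg_singleton, Set.smul_set_neg]
  have h2 : {t} + C ⊆ ρ • (-C) := by
    calc {t} + C ⊆ {t} + ({-t} + ρ • (-C)) := Set.add_subset_add_left hCneg
      _ = ρ • (-C) := by
          rw [← add_assoc, Set.singleton_add_singleton, add_neg_cancel,
            Set.singleton_zero, zero_add]
  have hCsub : {ρ⁻¹ • t} + ρ⁻¹ • C ⊆ -C := by
    calc {ρ⁻¹ • t} + ρ⁻¹ • C = ρ⁻¹ • ({t} + C) := by
          rw [smul_add, Set.smul_set_singleton]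
      _ ⊆ ρ⁻¹ • (ρ • (-C)) := Set.smul_set_mono h2
      _ = -C := by rw [smul_smul, inv_mul_cancel₀ hρ0.ne', one_smul]
  have hsub : {ρ⁻¹ • t} + (1 + ρ⁻¹) • C ⊆ C - C := by
    rw [sub_eq_add_neg_set]
    calc {ρ⁻¹ • t} + (1 + ρ⁻¹) • C = {ρ⁻¹ • t} + (C + ρ⁻¹ • C) := by
          rw [hCc.add_smul zero_le_one hinv0, one_smul]
      _ = C + ({ρ⁻¹ • t} + ρ⁻¹ • C) := by
          rw [← add_assoc, add_comm ({ρ⁻¹ • t} : Set (Fin n → ℝ)) C, add_assoc]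
      _ ⊆ C + (-C) := Set.add_subset_add_left hCsub
  refine ⟨by positivity, x + μ • (ρ⁻¹ • t), ?_⟩
  rw [vadd_eq_singleton_add]
  have hscal : μ * (ρ + 1) / ρ = μ * (1 + ρ⁻¹) := by field_simp
  calc {x + μ • (ρ⁻¹ • t)} + (μ * (ρ + 1) / ρ) • C
      = {x} + ({μ • (ρ⁻¹ • t)} + μ • ((1 + ρ⁻¹) • C)) := by
        rw [← Set.singleton_add_singleton, add_assoc, hscal, mul_smul]
    _ = {x} + μ • ({ρ⁻¹ • t} + (1 + ρ⁻¹) • C) := by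
        rw [smul_add, Set.smul_set_singleton]
    _ ⊆ {x} + μ • (C - C) := Set.add_subset_add_left (Set.smul_set_mono hsub)
    _ ⊆ K := hx

end Stmt2Aux

open Stmt2Aux in
theorem stmt2 {n : ℕ} (K C : Set (Fin n → ℝ)) (hK : IsBody K) (hC : IsBody C) :
    (asym C + 1) / asym C ≤ inrad K C / inrad K (C - C) ∧
    inrad K C / inrad K (C - C) ≤ asym C + 1 := by
  obtain ⟨hKc, hKcomp, hKi⟩ := hK
  obtain ⟨hCc, hCcomp, hCi⟩ := hC
  rcases Nat.eq_zero_or_pos n with hn | hn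
  · -- degenerate case n = 0
    subst hn
    haveI : IsEmpty (Fin 0) := Fin.isEmpty
    haveI : Subsingleton (Fin 0 → ℝ) := ⟨fun f g => funext fun i => i.elim0⟩
    have hCne : C.Nonempty := hCi.mono interior_subset
    have hKne : K.Nonempty := hKi.mono interior_subset
    have hasym : asym C = 0 := by
      have : circSet (-C) C = Set.Ioi 0 := by
        ext ρ
        simp only [circSet, Set.mem_setOf_eq, Set.mem_Ioi]
        refine ⟨fun h => h.1, fun h => ⟨h, (0 : Fin 0 → ℝ), ?_⟩⟩
        have : ((0 : Fin 0 → ℝ) +ᵥ ρ • C : Set (Fin 0 → ℝ)).Nonempty := by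
          obtain ⟨c, hc⟩ := hCne
          exact ⟨(0 : Fin 0 → ℝ) +ᵥ ρ • c, ⟨ρ • c, Set.smul_mem_smul_set hc, rfl⟩⟩
        rw [Subsingleton.eq_univ_of_nonempty this]
        exact Set.subset_univ _
      rw [asym, circR_eq, this, csInf_Ioi]
    have hinr : ∀ D : Set (Fin 0 → ℝ), D.Nonempty → inrad K D = 0 := by
      intro D hD
      have hKuniv : K = Set.univ := Subsingleton.eq_univ_of_nonempty hKne
      have : inradSet K D = Set.Ici 0 := by
        ext ρ
        simp only [inradSet, Set.mem_setOf_eq, Set.mem_Ici]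
        exact ⟨fun h => h.1, fun h => ⟨h, 0, by rw [hKuniv]; exact Set.subset_univ _⟩⟩
      rw [inrad_eq, this, Real.sSup_of_not_bddAbove]
      exact not_bddAbove_Ici (a := (0:ℝ))
    have hCCne : (C - C).Nonempty := hCne.sub hCne
    rw [hasym, hinr C hCne, hinr (C - C) hCCne]
    norm_num
  · -- main case n ≥ 1
    haveI : Nonempty (Fin n) := ⟨⟨0, hn⟩⟩
    have hKb : Bornology.IsBounded K := hKcomp.isBounded
    have hCb : Bornology.IsBounded C := hCcomp.isBounded
    have hCCb : Bornology.IsBounded (C - C) := hCb.sub hCb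
    -- two distinct points of C
    obtain ⟨c, hcint⟩ := hCi
    obtain ⟨ε, hε, hball⟩ := Metric.isOpen_iff.1 isOpen_interior c hcint
    set c' : Fin n → ℝ := c + (ε / 2) • (1 : Fin n → ℝ) with hcdef
    have hcC' : c' ∈ C := by
      apply interior_subset; apply hball
      simp only [Metric.mem_ball, hcdef, dist_eq_norm, add_sub_cancel_left]
      rw [norm_smul, Real.norm_eq_abs, abs_of_pos (by linarith)]
      rw [norm_one]; linarith
    have hcC : c ∈ C := interior_subset hcint
    have hne : c' ≠ c := by
      intro h
      have h2 := congrFun (sub_eq_zero.2 h) ⟨0, hn⟩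
      simp only [hcdef, Pi.sub_apply, Pi.add_apply, Pi.smul_apply, Pi.one_apply,
        Pi.zero_apply, smul_eq_mul, mul_one] at h2
      have : (ε/2 : ℝ) = 0 := by linarith [h2]
      linarith
    have hd : 0 < dist c' c := dist_pos.2 hne
    -- the three sets
    set S := circSet (-C) C with hSdef
    set A := inradSet K C with hAdef
    set AD := inradSet K (C - C) with hADdef
    have hS_ne : S.Nonempty := circSet_nonempty hCb ⟨c, hcint⟩
    -- lower bound on S
    have hdiam_pos : 0 < Metric.diam C :=
      lt_of_lt_of_le hd (Metric.dist_le_diam_of_mem hCb hcC' hcC)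
    set δ : ℝ := dist c' c / Metric.diam C with hδdef
    have hδpos : 0 < δ := div_pos hd hdiam_pos
    have hS_lb : ∀ ρ ∈ S, δ ≤ ρ := by
      rintro ρ ⟨hρ0, t, ht⟩
      obtain ⟨a, ha, hae⟩ := ht (show -c' ∈ -C from Set.neg_mem_neg.2 hcC')
      obtain ⟨b, hb, hbe⟩ := ht (show -c ∈ -C from Set.neg_mem_neg.2 hcC)
      obtain ⟨a', ha', rfl⟩ := ha
      obtain ⟨b', hb', rfl⟩ := hb
      have hdist : dist c' c ≤ ρ * Metric.diam C := by
        have h1 : dist c' c = dist (-c') (-c) := (dist_neg_neg _ _).symm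
        rw [h1, ← hae, ← hbe]
        simp only [vadd_eq_add]
        rw [dist_add_left, dist_smul₀, Real.norm_eq_abs, abs_of_pos hρ0]
        exact mul_le_mul_of_nonneg_left (Metric.dist_le_diam_of_mem hCb ha' hb') hρ0.le
      rw [hδdef, div_le_iff₀ hdiam_pos]
      linarith
    have hS_bb : BddBelow S := ⟨δ, hS_lb⟩
    set s : ℝ := asym C with hsdef
    have hs_eq : s = sInf S := rfl
    have hs_pos : 0 < s := by
      rw [hs_eq]; exact lt_of_lt_of_le hδpos (le_csInf hS_ne hS_lb)
    -- inradius facts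
    have hA_bdd : BddAbove A := inradSet_bddAbove hKb hcC' hcC hne
    have hm1 : c' - c ∈ C - C := Set.sub_mem_sub hcC' hcC
    have hm2 : c - c' ∈ C - C := Set.sub_mem_sub hcC hcC'
    have hneCC : c' - c ≠ c - c' := by
      intro h
      apply hne
      have h3 : (2:ℝ) • (c' - c) = 0 := by
        rw [two_smul]
        nth_rewrite 2 [h]
        abel
      have h4 : c' - c = 0 := by
        rcases smul_eq_zero.1 h3 with h5 | h5
        · norm_num at h5
        · exact h5
      exact sub_eq_zero.1 h4
    have hAD_bdd : BddAbove AD := inradSet_bddAbove hKb hm1 hm2 hneCC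
    obtain ⟨ρA, hρA0, hρAmem⟩ := inradSet_pos hKi hCb
    obtain ⟨ρD, hρD0, hρDmem⟩ := inradSet_pos hKi hCCb
    have hA_ne : A.Nonempty := ⟨ρA, hρAmem⟩
    have hAD_ne : AD.Nonempty := ⟨ρD, hρDmem⟩
    set rC : ℝ := inrad K C with hrCdef
    set rD : ℝ := inrad K (C - C) with hrDdef
    have hrC_eq : rC = sSup A := rfl
    have hrD_eq : rD = sSup AD := rfl
    have hrC_pos : 0 < rC := lt_of_lt_of_le hρA0 (le_csSup hA_bdd hρAmem)
    have hrD_pos : 0 < rD := lt_of_lt_of_le hρD0 (le_csSup hAD_bdd hρDmem)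
    -- key inequalities
    have h1 : ∀ ρ ∈ S, rC ≤ (ρ + 1) * rD := by
      intro ρ hρ
      have hρ0 : 0 < ρ := hρ.1
      rw [hrC_eq]
      refine csSup_le hA_ne fun μ hμ => ?_
      have hle := le_csSup hAD_bdd (mem_AD hCc hρ hμ)
      rw [← hrD_eq, div_le_iff₀ (by linarith : (0:ℝ) < ρ + 1)] at hle
      nlinarith
    have h2 : ∀ ρ ∈ S, (ρ + 1) * rD ≤ ρ * rC := by
      intro ρ hρ
      have hρ0 : 0 < ρ := hρ.1
      have hDle : rD ≤ ρ * rC / (ρ + 1) := by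
        rw [hrD_eq]
        refine csSup_le hAD_ne fun μ hμ => ?_
        have hmem := le_csSup hA_bdd (mem_A hCc hρ hμ)
        rw [← hrC_eq] at hmem
        rw [le_div_iff₀ (by linarith : (0:ℝ) < ρ + 1)]
        rw [div_le_iff₀ hρ0] at hmem
        nlinarith
      rw [le_div_iff₀ (by linarith : (0:ℝ) < ρ + 1)] at hDle
      nlinarith
    -- conclude
    have hupper : rC ≤ (s + 1) * rD := by
      have hall : ∀ ρ ∈ S, (rC - rD) / rD ≤ ρ := by
        intro ρ hρ
        rw [div_le_iff₀ hrD_pos]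
        have := h1 ρ hρ
        nlinarith
      have hsle := le_csInf hS_ne hall
      rw [← hs_eq] at hsle
      rw [div_le_iff₀ hrD_pos] at hsle
      nlinarith
    have hgap : 0 < rC - rD := by
      obtain ⟨ρ₀, hρ₀⟩ := hS_ne
      have := h2 ρ₀ hρ₀
      have hρ₀0 : 0 < ρ₀ := hρ₀.1
      nlinarith
    have hlower : (s + 1) * rD ≤ s * rC := by
      have hall : ∀ ρ ∈ S, rD / (rC - rD) ≤ ρ := by
        intro ρ hρ
        rw [div_le_iff₀ hgap]
        have := h2 ρ hρ
        nlinarith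
      have hsle := le_csInf hS_ne hall
      rw [← hs_eq] at hsle
      rw [div_le_iff₀ hgap] at hsle
      nlinarith
    constructor
    · rw [div_le_div_iff₀ hs_pos hrD_pos]
      nlinarith
    · rw [div_le_iff₀ hrD_pos]
      nlinarith
end

section
/- For convex bodies K, C in R^n, min{s(K), s(C)} ≥ max{ r(K,−C)/r(K,C), R(K,−C)/R(K,C) }. -/
open Pointwise

open Metric


namespace StmtAux3

variable {n : ℕ}

lemma mem_tvs' {t x : Fin n → ℝ} {ρ : ℝ} {C : Set (Fin n → ℝ)} :
    x ∈ t +ᵥ ρ • C ↔ ∃ c ∈ C, x = t + ρ • c := by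
  simp only [Set.mem_vadd_set, Set.mem_smul_set, vadd_eq_add]
  constructor
  · rintro ⟨y, ⟨c, hc, rfl⟩, rfl⟩; exact ⟨c, hc, rfl⟩
  · rintro ⟨c, hc, rfl⟩; exact ⟨ρ • c, ⟨c, hc, rfl⟩, rfl⟩

lemma comp_subset {K C D : Set (Fin n → ℝ)} {t u : Fin n → ℝ} {b a : ℝ}
    (h1 : K ⊆ t +ᵥ b • C) (h2 : C ⊆ u +ᵥ a • D) :
    K ⊆ (t + b • u) +ᵥ (b * a) • D := by
  intro x hx
  obtain ⟨c, hc, rfl⟩ := mem_tvs'.1 (h1 hx)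
  obtain ⟨d, hd, rfl⟩ := mem_tvs'.1 (h2 hc)
  exact mem_tvs'.2 ⟨d, hd, by module⟩

lemma neg_sub_tvs {K C : Set (Fin n → ℝ)} {t : Fin n → ℝ} {ρ : ℝ}
    (h : K ⊆ t +ᵥ ρ • C) : -K ⊆ (-t) +ᵥ ρ • (-C) := by
  intro x hx
  obtain ⟨c, hc, he⟩ := mem_tvs'.1 (h (Set.mem_neg.1 hx))
  refine mem_tvs'.2 ⟨-c, Set.neg_mem_neg.2 hc, ?_⟩
  have : x = -(t + ρ • c) := by rw [← he]; simp
  rw [this]; module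

lemma key_circ_C {K C : Set (Fin n → ℝ)} {w t : Fin n → ℝ} {a b : ℝ}
    (hw : -C ⊆ w +ᵥ a • C) (ht : K ⊆ t +ᵥ b • C) :
    ∃ t' : Fin n → ℝ, K ⊆ t' +ᵥ (a * b) • (-C) := by
  have h2 : C ⊆ (-w) +ᵥ a • (-C) := by
    have := neg_sub_tvs hw; rwa [neg_neg] at this
  exact ⟨t + b • (-w), by have := comp_subset ht h2; rwa [mul_comm]⟩

lemma key_circ_K {K C : Set (Fin n → ℝ)} {w t : Fin n → ℝ} {a b : ℝ}
    (hw : -K ⊆ w +ᵥ a • K) (ht : K ⊆ t +ᵥ b • C) :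
    ∃ t' : Fin n → ℝ, K ⊆ t' +ᵥ (a * b) • (-C) := by
  have h2 := comp_subset hw ht
  have h3 := neg_sub_tvs h2
  rw [neg_neg] at h3
  exact ⟨-(w + a • t), h3⟩

lemma key_inr_C {K C : Set (Fin n → ℝ)} {w t : Fin n → ℝ} {a ρ : ℝ}
    (ha : 0 < a) (hw : -C ⊆ w +ᵥ a • C) (ht : t +ᵥ ρ • (-C) ⊆ K) :
    ∃ t' : Fin n → ℝ, t' +ᵥ (ρ / a) • C ⊆ K := by
  have h2 : C ⊆ (-w) +ᵥ a • (-C) := by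
    have := neg_sub_tvs hw; rwa [neg_neg] at this
  refine ⟨t + (ρ/a) • w, ?_⟩
  rintro x hx
  obtain ⟨c, hc, rfl⟩ := mem_tvs'.1 hx
  obtain ⟨d, hd, hcd⟩ := mem_tvs'.1 (h2 hc)
  apply ht
  refine mem_tvs'.2 ⟨d, hd, ?_⟩
  subst hcd
  rw [smul_add, smul_smul, div_mul_cancel₀ _ (ne_of_gt ha)]
  module

lemma key_inr_K {K C : Set (Fin n → ℝ)} {w t : Fin n → ℝ} {a ρ : ℝ}
    (ha : 0 < a) (hw : -K ⊆ w +ᵥ a • K) (ht : t +ᵥ ρ • (-C) ⊆ K) :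
    ∃ t' : Fin n → ℝ, t' +ᵥ (ρ / a) • C ⊆ K := by
  refine ⟨(1/a) • (-t - w), ?_⟩
  rintro x hx
  obtain ⟨c, hc, rfl⟩ := mem_tvs'.1 hx
  have h1 : t + ρ • (-c) ∈ K := ht (mem_tvs'.2 ⟨-c, Set.neg_mem_neg.2 hc, rfl⟩)
  obtain ⟨k, hk, he⟩ := mem_tvs'.1 (hw (Set.neg_mem_neg.2 h1))
  suffices hxk : (1/a) • (-t - w) + (ρ/a) • c = k by rwa [hxk]
  apply smul_right_injective (Fin n → ℝ) (ne_of_gt ha)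
  have he2 : a • k = -(t + ρ • (-c)) - w := by rw [he]; abel
  have e1 : a • ((1/a) • (-t - w)) = -t - w := by
    rw [smul_smul, mul_one_div, div_self (ne_of_gt ha), one_smul]
  have e2 : a • ((ρ/a) • c) = ρ • c := by
    rw [smul_smul, mul_comm, div_mul_cancel₀ _ (ne_of_gt ha)]
  show a • _ = a • _
  rw [smul_add, e1, e2, he2]
  module

lemma exists_cball {K : Set (Fin n → ℝ)} (h : IsCompact K) :
    ∃ M > 0, K ⊆ closedBall 0 M := by
  obtain ⟨M, hM⟩ := h.isBounded.subset_closedBall 0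
  exact ⟨max M 1, lt_of_lt_of_le one_pos (le_max_right _ _),
    hM.trans (closedBall_subset_closedBall (le_max_left _ _))⟩

lemma exists_ball {K : Set (Fin n → ℝ)} (h : (interior K).Nonempty) :
    ∃ x, ∃ ε > 0, ball x ε ⊆ K := by
  obtain ⟨x, hx⟩ := h
  obtain ⟨ε, hε, hb⟩ := Metric.mem_nhds_iff.1 (mem_interior_iff_mem_nhds.1 hx)
  exact ⟨x, ε, hε, hb⟩

lemma exists_unit (hn : 0 < n) : ∃ e : Fin n → ℝ, ‖e‖ = 1 := by
  have : Nonempty (Fin n) := ⟨⟨0, hn⟩⟩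
  exact ⟨fun _ => (1:ℝ), by rw [pi_norm_const]; simp⟩

lemma RSet_nonempty {K C : Set (Fin n → ℝ)} (hKc : IsCompact K)
    (hCi : (interior C).Nonempty) :
    {ρ : ℝ | 0 < ρ ∧ ∃ t : Fin n → ℝ, K ⊆ t +ᵥ ρ • C}.Nonempty := by
  obtain ⟨M, hM, hKM⟩ := exists_cball hKc
  obtain ⟨c, ε, hε, hbC⟩ := exists_ball hCi
  set ρ := 2 * M / ε with hρ
  have hρpos : 0 < ρ := by positivity
  refine ⟨ρ, hρpos, -(ρ • c), fun x hx => ?_⟩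
  have h2 : ρ • (ρ⁻¹ • x) = x := by
    rw [smul_smul, mul_inv_cancel₀ hρpos.ne', one_smul]
  refine mem_tvs'.2 ⟨c + ρ⁻¹ • x, hbC ?_, by rw [smul_add, h2]; module⟩
  have hxM : ‖x‖ ≤ M := by simpa using hKM hx
  have : ‖ρ⁻¹ • x‖ < ε := by
    rw [norm_smul]
    have : ρ⁻¹ = ε / (2 * M) := by rw [hρ]; field_simp
    rw [this]
    calc |ε / (2*M)| * ‖x‖ = ε / (2*M) * ‖x‖ := by rw [abs_of_pos (by positivity)]
    _ ≤ ε / (2*M) * M := by gcongr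
    _ = ε / 2 := by field_simp
    _ < ε := by linarith
  simpa [dist_eq_norm] using this

lemma RSet_lb {K C : Set (Fin n → ℝ)} (hn : 0 < n) (hKi : (interior K).Nonempty)
    (hCc : IsCompact C) :
    ∃ δ > 0, ∀ ρ ∈ {ρ : ℝ | 0 < ρ ∧ ∃ t : Fin n → ℝ, K ⊆ t +ᵥ ρ • C}, δ ≤ ρ := by
  obtain ⟨R, hR, hCR⟩ := exists_cball hCc
  obtain ⟨x, ε, hε, hbK⟩ := exists_ball hKi
  obtain ⟨e, he⟩ := exists_unit hn
  refine ⟨ε / (2 * R), by positivity, ?_⟩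
  rintro ρ ⟨hρ, t, ht⟩
  have hmem : ∀ s : ℝ, |s| < ε → x + s • e ∈ K := by
    intro s hs
    apply hbK
    simp only [mem_ball, dist_eq_norm]
    rw [add_sub_cancel_left, norm_smul, he, mul_one, Real.norm_eq_abs]
    exact hs
  have h1 := ht (hmem (ε/2) (by rw [abs_of_pos (by positivity)]; linarith))
  have h2 := ht (hmem (-(ε/2)) (by rw [abs_neg, abs_of_pos (by positivity)]; linarith))
  obtain ⟨c1, hc1, he1⟩ := mem_tvs'.1 h1
  obtain ⟨c2, hc2, he2⟩ := mem_tvs'.1 h2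
  have hdiff : ε • e = ρ • (c1 - c2) := by
    have h3 : (x + (ε/2) • e) - (x + (-(ε/2)) • e) = (t + ρ • c1) - (t + ρ • c2) := by
      rw [← he1, ← he2]
    have h4 : ε • e = (x + (ε/2) • e) - (x + (-(ε/2)) • e) := by module
    rw [h4, h3]; module
  have hnorm : ε = ρ * ‖c1 - c2‖ := by
    have := congrArg norm hdiff
    rwa [norm_smul, norm_smul, he, mul_one, Real.norm_eq_abs, Real.norm_eq_abs,
      abs_of_pos hε, abs_of_pos hρ] at this
  have hc12 : ‖c1 - c2‖ ≤ 2 * R := by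
    have h1' : ‖c1‖ ≤ R := by simpa using hCR hc1
    have h2' : ‖c2‖ ≤ R := by simpa using hCR hc2
    calc ‖c1 - c2‖ ≤ ‖c1‖ + ‖c2‖ := norm_sub_le _ _
    _ ≤ 2 * R := by linarith
  rw [div_le_iff₀ (by positivity)]
  calc ε = ρ * ‖c1 - c2‖ := hnorm
  _ ≤ ρ * (2 * R) := by gcongr

lemma zero_mem_IrSet {K C : Set (Fin n → ℝ)} (hKne : K.Nonempty) :
    (0:ℝ) ∈ {ρ : ℝ | 0 ≤ ρ ∧ ∃ t : Fin n → ℝ, t +ᵥ ρ • C ⊆ K} := by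
  obtain ⟨k, hk⟩ := hKne
  refine ⟨le_refl _, k, ?_⟩
  rintro x hx
  obtain ⟨c, hc, rfl⟩ := mem_tvs'.1 hx
  simpa using hk

lemma IrSet_bddAbove {K C : Set (Fin n → ℝ)} (hn : 0 < n) (hKc : IsCompact K)
    (hCi : (interior C).Nonempty) :
    BddAbove {ρ : ℝ | 0 ≤ ρ ∧ ∃ t : Fin n → ℝ, t +ᵥ ρ • C ⊆ K} := by
  obtain ⟨M, hM, hKM⟩ := exists_cball hKc
  obtain ⟨c0, ε, hε, hbC⟩ := exists_ball hCi
  obtain ⟨e, he⟩ := exists_unit hn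
  refine ⟨4 * M / ε, ?_⟩
  rintro ρ ⟨hρ0, t, ht⟩
  rcases eq_or_lt_of_le hρ0 with rfl | hρ
  · positivity
  have hmem : ∀ s : ℝ, |s| < ε → c0 + s • e ∈ C := by
    intro s hs
    apply hbC
    simp only [mem_ball, dist_eq_norm]
    rw [add_sub_cancel_left, norm_smul, he, mul_one, Real.norm_eq_abs]
    exact hs
  have h1 : t + ρ • (c0 + (ε/2) • e) ∈ K :=
    ht (mem_tvs'.2 ⟨_, hmem (ε/2) (by rw [abs_of_pos (by positivity)]; linarith), rfl⟩)
  have h2 : t + ρ • (c0 + (-(ε/2)) • e) ∈ K :=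
    ht (mem_tvs'.2 ⟨_, hmem (-(ε/2)) (by rw [abs_neg, abs_of_pos (by positivity)]; linarith), rfl⟩)
  have h1' : ‖t + ρ • (c0 + (ε/2) • e)‖ ≤ M := by simpa using hKM h1
  have h2' : ‖t + ρ • (c0 + (-(ε/2)) • e)‖ ≤ M := by simpa using hKM h2
  have hdiff : (t + ρ • (c0 + (ε/2) • e)) - (t + ρ • (c0 + (-(ε/2)) • e))
      = (ρ * ε) • e := by module
  have : ρ * ε ≤ 2 * M := by
    have := norm_sub_le (t + ρ • (c0 + (ε/2) • e)) (t + ρ • (c0 + (-(ε/2)) • e))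
    rw [hdiff, norm_smul, he, mul_one, Real.norm_eq_abs, abs_of_pos (by positivity)] at this
    linarith
  rw [le_div_iff₀ hε]
  nlinarith

lemma IrSet_pos_mem {K C : Set (Fin n → ℝ)} (hKi : (interior K).Nonempty)
    (hCc : IsCompact C) :
    ∃ ρ > 0, ρ ∈ {ρ : ℝ | 0 ≤ ρ ∧ ∃ t : Fin n → ℝ, t +ᵥ ρ • C ⊆ K} := by
  obtain ⟨R, hR, hCR⟩ := exists_cball hCc
  obtain ⟨x, ε, hε, hbK⟩ := exists_ball hKi
  refine ⟨ε / (2 * R), by positivity, le_of_lt (by positivity), x, ?_⟩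
  rintro y hy
  obtain ⟨c, hc, rfl⟩ := mem_tvs'.1 hy
  apply hbK
  simp only [mem_ball, dist_eq_norm]
  rw [add_sub_cancel_left, norm_smul, Real.norm_eq_abs, abs_of_pos (by positivity)]
  have hcR : ‖c‖ ≤ R := by simpa using hCR hc
  calc ε / (2 * R) * ‖c‖ ≤ ε / (2 * R) * R := by gcongr
  _ = ε / 2 := by field_simp
  _ < ε := by linarith

end StmtAux3

namespace StmtAux3

variable {n : ℕ}

lemma circR_subsingleton (hsub : Subsingleton (Fin n → ℝ)) {K C : Set (Fin n → ℝ)}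
    (hCne : C.Nonempty) : circR K C = 0 := by
  have hset : {ρ : ℝ | 0 < ρ ∧ ∃ t : Fin n → ℝ, K ⊆ t +ᵥ ρ • C} = Set.Ioi 0 := by
    ext ρ
    simp only [Set.mem_setOf_eq, Set.mem_Ioi]
    exact ⟨fun h => h.1, fun h => ⟨h, 0, fun x _ =>
      mem_tvs'.2 ⟨hCne.some, hCne.some_mem, @Subsingleton.elim _ hsub _ _⟩⟩⟩
  rw [circR, hset, csInf_Ioi]

lemma inrad_subsingleton (hsub : Subsingleton (Fin n → ℝ)) {K C : Set (Fin n → ℝ)}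
    (hKne : K.Nonempty) : inrad K C = 0 := by
  have hset : {ρ : ℝ | 0 ≤ ρ ∧ ∃ t : Fin n → ℝ, t +ᵥ ρ • C ⊆ K} = Set.Ici 0 := by
    ext ρ
    simp only [Set.mem_setOf_eq, Set.mem_Ici]
    refine ⟨fun h => h.1, fun h => ⟨h, 0, fun x _ => ?_⟩⟩
    have := hKne.some_mem
    rwa [@Subsingleton.elim _ hsub x hKne.some]
  rw [inrad, hset, Real.sSup_of_not_bddAbove (not_bddAbove_Ici 0)]

lemma circ_bound {K C X : Set (Fin n → ℝ)}
    (hBne : {ρ : ℝ | 0 < ρ ∧ ∃ t : Fin n → ℝ, K ⊆ t +ᵥ ρ • C}.Nonempty)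
    (hRpos : 0 < circR K C)
    (hAne : {ρ : ℝ | 0 < ρ ∧ ∃ t : Fin n → ℝ, -X ⊆ t +ᵥ ρ • X}.Nonempty)
    (hkey : ∀ (a : ℝ) (w : Fin n → ℝ) (b : ℝ) (t : Fin n → ℝ), 0 < a → -X ⊆ w +ᵥ a • X →
      K ⊆ t +ᵥ b • C → ∃ t' : Fin n → ℝ, K ⊆ t' +ᵥ (a*b) • (-C)) :
    circR K (-C) / circR K C ≤ asym X := by
  have main : ∀ a ∈ {ρ : ℝ | 0 < ρ ∧ ∃ t : Fin n → ℝ, -X ⊆ t +ᵥ ρ • X},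
      circR K (-C) / circR K C ≤ a := by
    rintro a ⟨ha, w, hw⟩
    rw [div_le_iff₀ hRpos]
    have hsub : a • {ρ : ℝ | 0 < ρ ∧ ∃ t : Fin n → ℝ, K ⊆ t +ᵥ ρ • C}
        ⊆ {ρ : ℝ | 0 < ρ ∧ ∃ t : Fin n → ℝ, K ⊆ t +ᵥ ρ • (-C)} := by
      rintro x ⟨b, ⟨hb, t, ht⟩, rfl⟩
      obtain ⟨t', ht'⟩ := hkey a w b t ha hw ht
      exact ⟨by simpa [smul_eq_mul] using mul_pos ha hb, t', by simpa [smul_eq_mul] using ht'⟩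
    have h1 : circR K (-C)
        ≤ sInf (a • {ρ : ℝ | 0 < ρ ∧ ∃ t : Fin n → ℝ, K ⊆ t +ᵥ ρ • C}) :=
      csInf_le_csInf ⟨0, fun ρ hρ => hρ.1.le⟩ hBne.smul_set hsub
    have h2 : sInf (a • {ρ : ℝ | 0 < ρ ∧ ∃ t : Fin n → ℝ, K ⊆ t +ᵥ ρ • C})
        = a * circR K C := by
      rw [Real.sInf_smul_of_nonneg ha.le, smul_eq_mul]; rfl
    linarith [h1, h2.le, h2.ge]
  exact le_csInf hAne main

lemma inr_bound {K C X : Set (Fin n → ℝ)}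
    (hKne : K.Nonempty)
    (hIpos : 0 < inrad K C)
    (hbdd : BddAbove {ρ : ℝ | 0 ≤ ρ ∧ ∃ t : Fin n → ℝ, t +ᵥ ρ • C ⊆ K})
    (hAne : {ρ : ℝ | 0 < ρ ∧ ∃ t : Fin n → ℝ, -X ⊆ t +ᵥ ρ • X}.Nonempty)
    (hkey : ∀ (a : ℝ) (w : Fin n → ℝ) (ρ : ℝ) (t : Fin n → ℝ), 0 < a → -X ⊆ w +ᵥ a • X →
      t +ᵥ ρ • (-C) ⊆ K → ∃ t' : Fin n → ℝ, t' +ᵥ (ρ/a) • C ⊆ K) :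
    inrad K (-C) / inrad K C ≤ asym X := by
  have main : ∀ a ∈ {ρ : ℝ | 0 < ρ ∧ ∃ t : Fin n → ℝ, -X ⊆ t +ᵥ ρ • X},
      inrad K (-C) / inrad K C ≤ a := by
    rintro a ⟨ha, w, hw⟩
    rw [div_le_iff₀ hIpos]
    have h1 : inrad K (-C) ≤ a * inrad K C := by
      refine csSup_le ⟨0, zero_mem_IrSet hKne⟩ ?_
      rintro ρ ⟨hρ0, t, ht⟩
      obtain ⟨t', ht'⟩ := hkey a w ρ t ha hw ht
      have h3 : ρ / a ≤ inrad K C := le_csSup hbdd ⟨by positivity, t', ht'⟩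
      rw [div_le_iff₀ ha] at h3
      calc ρ ≤ inrad K C * a := h3
      _ = a * inrad K C := mul_comm _ _
    exact h1
  exact le_csInf hAne main

end StmtAux3


theorem stmt3 {n : ℕ} (K C : Set (Fin n → ℝ)) (hK : IsBody K) (hC : IsBody C) :
    max (inrad K (-C) / inrad K C) (circR K (-C) / circR K C) ≤ min (asym K) (asym C) := by
  obtain ⟨hKcv, hKc, hKi⟩ := hK
  obtain ⟨hCcv, hCc, hCi⟩ := hC
  have hKne : K.Nonempty := hKi.mono interior_subset
  have hCne : C.Nonempty := hCi.mono interior_subset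
  rcases Nat.eq_zero_or_pos n with hn | hn
  · have hsub : Subsingleton (Fin n → ℝ) := by subst hn; infer_instance
    have e1 : inrad K (-C) = 0 := StmtAux3.inrad_subsingleton hsub hKne
    have e2 : inrad K C = 0 := StmtAux3.inrad_subsingleton hsub hKne
    have e3 : circR K (-C) = 0 := StmtAux3.circR_subsingleton hsub (Set.nonempty_neg.2 hCne)
    have e4 : circR K C = 0 := StmtAux3.circR_subsingleton hsub hCne
    have e5 : asym K = 0 := StmtAux3.circR_subsingleton hsub hKne
    have e6 : asym C = 0 := StmtAux3.circR_subsingleton hsub hCne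
    rw [e1, e2, e3, e4, e5, e6]
    norm_num
  · have hBne := StmtAux3.RSet_nonempty hKc hCi
    have hAKne := StmtAux3.RSet_nonempty (K := -K) hKc.neg hKi
    have hACne := StmtAux3.RSet_nonempty (K := -C) hCc.neg hCi
    have hRpos : 0 < circR K C := by
      obtain ⟨δ, hδ, hlb⟩ := StmtAux3.RSet_lb hn hKi hCc
      exact lt_of_lt_of_le hδ (le_csInf hBne hlb)
    have hbdd := StmtAux3.IrSet_bddAbove hn hKc hCi
    have hIpos : 0 < inrad K C := by
      obtain ⟨ρ, hρ, hmem⟩ := StmtAux3.IrSet_pos_mem hKi hCc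
      exact lt_of_lt_of_le hρ (le_csSup hbdd hmem)
    refine max_le (le_min ?_ ?_) (le_min ?_ ?_)
    · exact StmtAux3.inr_bound hKne hIpos hbdd hAKne
        (fun a w ρ t ha hw ht => StmtAux3.key_inr_K ha hw ht)
    · exact StmtAux3.inr_bound hKne hIpos hbdd hACne
        (fun a w ρ t ha hw ht => StmtAux3.key_inr_C ha hw ht)
    · exact StmtAux3.circ_bound hBne hRpos hAKne
        (fun a w b t ha hw ht => StmtAux3.key_circ_K hw ht)
    · exact StmtAux3.circ_bound hBne hRpos hACne
        (fun a w b t ha hw ht => StmtAux3.key_circ_C hw ht)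
end

section
/- For convex bodies K, C in R^n, s(C) ≥ R(K,C)·r(K,C−C) / ( r(K,C)·R(K,C−C) ). -/
open Pointwise

namespace Stmt4Aux

open Metric

variable {n : ℕ}

/-- In a nontrivial space, a ball inside a ball forces the radius inequality. -/
lemma ball_sub_ball (hn : 0 < n) {x y : Fin n → ℝ} {r R : ℝ} (hr : 0 < r)
    (h : ball x r ⊆ ball y R) : r ≤ R := by
  have : NeZero n := ⟨hn.ne'⟩
  obtain ⟨u, hu⟩ : ∃ u : Fin n → ℝ, ‖u‖ = 1 := exists_norm_eq _ zero_le_one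
  have hR : 0 < R := by
    have := h (mem_ball_self hr)
    exact lt_of_le_of_lt dist_nonneg this
  refine le_of_forall_lt fun ε hε => ?_
  rcases le_or_gt ε 0 with h0 | h0
  · exact lt_of_le_of_lt h0 hR
  · have hp : x + ε • u ∈ ball y R := by
      apply h
      simp only [mem_ball, dist_self_add_left, norm_smul, Real.norm_eq_abs, hu, mul_one,
        abs_of_pos h0]
      exact hε
    have hq : x - ε • u ∈ ball y R := by
      apply h
      simp only [mem_ball]
      have : dist (x - ε • u) x = ε := by
        rw [dist_eq_norm]
        simp [norm_smul, Real.norm_eq_abs, hu, abs_of_pos h0]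
      rw [this]; exact hε
    have hd : dist (x + ε • u) (x - ε • u) = 2 * ε := by
      rw [dist_eq_norm]
      have : (x + ε • u) - (x - ε • u) = (2 * ε) • u := by module
      rw [this, norm_smul, Real.norm_eq_abs, hu, mul_one, abs_of_pos (by linarith)]
    have := dist_triangle (x + ε • u) y (x - ε • u)
    rw [mem_ball] at hp hq
    rw [dist_comm y (x - ε • u)] at this
    nlinarith [hp, hq, hd]

/-- The circumradius set is nonempty when `K` is bounded and `C` has an interior ball. -/
lemma circ_set_nonempty {K C : Set (Fin n → ℝ)} {M δ : ℝ} {c₀ : Fin n → ℝ}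
    (hM : 0 < M) (hδ : 0 < δ) (hK : K ⊆ ball 0 M) (hC : ball c₀ δ ⊆ C) :
    (2 * M / δ) ∈ {ρ : ℝ | 0 < ρ ∧ ∃ t : Fin n → ℝ, K ⊆ t +ᵥ ρ • C} := by
  set ρ := 2 * M / δ with hρdef
  have hρ : 0 < ρ := by positivity
  refine ⟨hρ, -(ρ • c₀), fun x hx => ?_⟩
  have hxn : ‖x‖ < M := by simpa [mem_ball, dist_eq_norm] using hK hx
  refine Set.mem_vadd_set.mpr ⟨ρ • (c₀ + ρ⁻¹ • x), Set.smul_mem_smul_set ?_, ?_⟩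
  · apply hC
    simp only [mem_ball, dist_self_add_left, norm_smul, Real.norm_eq_abs,
      abs_of_pos (inv_pos.mpr hρ)]
    have : ρ⁻¹ * ‖x‖ < ρ⁻¹ * M := by
      apply mul_lt_mul_of_pos_left hxn (inv_pos.mpr hρ)
    have h2 : ρ⁻¹ * M = δ / 2 := by
      rw [hρdef]; field_simp
    rw [h2] at this; linarith
  · have : ρ • (c₀ + ρ⁻¹ • x) = ρ • c₀ + x := by
      rw [smul_add, smul_smul, mul_inv_cancel₀ hρ.ne', one_smul]
    rw [this]
    simp only [vadd_eq_add]; module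

/-- Every element of the circumradius set is bounded below. -/
lemma circ_set_lb (hn : 0 < n) {K C : Set (Fin n → ℝ)} {M δ : ℝ} {x₀ : Fin n → ℝ}
    (hM : 0 < M) (hδ : 0 < δ) (hK : ball x₀ δ ⊆ K) (hC : C ⊆ ball 0 M) :
    ∀ ρ ∈ {ρ : ℝ | 0 < ρ ∧ ∃ t : Fin n → ℝ, K ⊆ t +ᵥ ρ • C}, δ / M ≤ ρ := by
  rintro ρ ⟨hρ, t, ht⟩
  have hball : ball x₀ δ ⊆ ball t (ρ * M) := by
    intro x hx
    obtain ⟨y, hy, hyx⟩ := Set.mem_vadd_set.mp (ht (hK hx))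
    obtain ⟨c, hc, rfl⟩ := Set.mem_smul_set.mp hy
    have hcn : ‖c‖ < M := by simpa [mem_ball, dist_eq_norm] using hC hc
    have : x = t + ρ • c := by rw [← hyx]; simp [vadd_eq_add]
    rw [this]
    simp only [mem_ball, dist_self_add_left, norm_smul, Real.norm_eq_abs, abs_of_pos hρ]
    exact mul_lt_mul_of_pos_left hcn hρ
  have := ball_sub_ball hn hδ hball
  rw [div_le_iff₀ hM]
  linarith [this]

/-- The inradius set is bounded above. -/
lemma in_set_bdd (hn : 0 < n) {K C : Set (Fin n → ℝ)} {M δ : ℝ} {c₀ : Fin n → ℝ}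
    (hM : 0 < M) (hδ : 0 < δ) (hC : ball c₀ δ ⊆ C) (hK : K ⊆ ball 0 M) :
    ∀ ρ ∈ {ρ : ℝ | 0 ≤ ρ ∧ ∃ t : Fin n → ℝ, t +ᵥ ρ • C ⊆ K}, ρ ≤ M / δ := by
  rintro ρ ⟨hρ0, t, ht⟩
  rcases eq_or_lt_of_le hρ0 with rfl | hρ
  · positivity
  have hball : ball (t + ρ • c₀) (ρ * δ) ⊆ ball 0 M := by
    intro y hy
    have hyK : y ∈ K := by
      apply ht
      refine Set.mem_vadd_set.mpr ⟨ρ • (c₀ + ρ⁻¹ • (y - t - ρ • c₀)), Set.smul_mem_smul_set ?_, ?_⟩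
      · apply hC
        simp only [mem_ball, dist_self_add_left, norm_smul, Real.norm_eq_abs,
          abs_of_pos (inv_pos.mpr hρ)]
        have hyd : ‖y - (t + ρ • c₀)‖ < ρ * δ := by simpa [mem_ball, dist_eq_norm] using hy
        have : y - t - ρ • c₀ = y - (t + ρ • c₀) := by module
        rw [this]
        rw [inv_mul_lt_iff₀ hρ]
        exact hyd
      · have : ρ • (c₀ + ρ⁻¹ • (y - t - ρ • c₀)) = ρ • c₀ + (y - t - ρ • c₀) := by
          rw [smul_add, smul_smul, mul_inv_cancel₀ hρ.ne', one_smul]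
        rw [this]
        simp only [vadd_eq_add]; module
    simpa [mem_ball, dist_eq_norm] using hK hyK
  have := ball_sub_ball hn (by positivity) hball
  rw [le_div_iff₀ hδ]
  nlinarith

/-- The inradius set contains a positive element. -/
lemma in_set_pos {K C : Set (Fin n → ℝ)} {M δ : ℝ} {x₀ : Fin n → ℝ}
    (hM : 0 < M) (hδ : 0 < δ) (hK : ball x₀ δ ⊆ K) (hC : C ⊆ ball 0 M) :
    (δ / (2 * M)) ∈ {ρ : ℝ | 0 ≤ ρ ∧ ∃ t : Fin n → ℝ, t +ᵥ ρ • C ⊆ K} := by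
  set ρ := δ / (2 * M) with hρdef
  have hρ : 0 < ρ := by positivity
  refine ⟨hρ.le, x₀, fun y hy => ?_⟩
  obtain ⟨z, hz, rfl⟩ := Set.mem_vadd_set.mp hy
  obtain ⟨c, hc, rfl⟩ := Set.mem_smul_set.mp hz
  apply hK
  have hcn : ‖c‖ < M := by simpa [mem_ball, dist_eq_norm] using hC hc
  simp only [vadd_eq_add, mem_ball, dist_self_add_left, norm_smul, Real.norm_eq_abs,
    abs_of_pos hρ]
  have h1 : ρ * ‖c‖ < ρ * M := mul_lt_mul_of_pos_left hcn hρ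
  have h2 : ρ * M = δ / 2 := by rw [hρdef]; field_simp
  linarith

end Stmt4Aux

theorem stmt4 {n : ℕ} (K C : Set (Fin n → ℝ)) (hK : IsBody K) (hC : IsBody C) :
    circR K C * inrad K (C - C) / (inrad K C * circR K (C - C)) ≤ asym C := by
  classical
  open Metric Stmt4Aux in
  obtain ⟨hKconv, hKcomp, hKint⟩ := hK
  obtain ⟨hCconv, hCcomp, hCint⟩ := hC
  rcases Nat.eq_zero_or_pos n with hn | hn
  · -- trivial case `n = 0`
    subst hn
    have hsub : Subsingleton (Fin 0 → ℝ) := by infer_instance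
    obtain ⟨c₀, hc₀⟩ := hCint
    have hc₀C : c₀ ∈ C := interior_subset hc₀
    have hIoi : ∀ (A : Set (Fin 0 → ℝ)),
        {ρ : ℝ | 0 < ρ ∧ ∃ t : Fin 0 → ℝ, A ⊆ t +ᵥ ρ • C} = Set.Ioi 0 := by
      intro A
      ext ρ
      simp only [Set.mem_setOf_eq, Set.mem_Ioi]
      constructor
      · rintro ⟨h, -⟩; exact h
      · intro h
        refine ⟨h, 0, fun x hx => ?_⟩
        exact Set.mem_vadd_set.mpr ⟨ρ • c₀, Set.smul_mem_smul_set hc₀C, Subsingleton.elim _ _⟩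
    have h1 : circR K C = 0 := by
      rw [circR, hIoi K, csInf_Ioi]
    have h2 : asym C = 0 := by
      rw [asym, circR, hIoi (-C), csInf_Ioi]
    rw [h1, h2, zero_mul, zero_div]
  · -- main case
    obtain ⟨x₀, hx₀⟩ := hKint
    obtain ⟨δK, hδK, hbK'⟩ := Metric.isOpen_iff.mp isOpen_interior x₀ hx₀
    have hballK : ball x₀ δK ⊆ K := hbK'.trans interior_subset
    obtain ⟨MK₀, hMK₀⟩ := hKcomp.isBounded.subset_ball 0
    set MK : ℝ := max MK₀ 1 with hMKdef
    have hMK : 0 < MK := lt_of_lt_of_le one_pos (le_max_right _ _)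
    have hKM : K ⊆ ball 0 MK := hMK₀.trans (ball_subset_ball (le_max_left _ _))
    obtain ⟨c₁, hc₁⟩ := hCint
    obtain ⟨δC, hδC, hbC'⟩ := Metric.isOpen_iff.mp isOpen_interior c₁ hc₁
    have hballC : ball c₁ δC ⊆ C := hbC'.trans interior_subset
    have hc₁C : c₁ ∈ C := hballC (mem_ball_self hδC)
    obtain ⟨MC₀, hMC₀⟩ := hCcomp.isBounded.subset_ball 0
    set MC : ℝ := max MC₀ 1 with hMCdef
    have hMC : 0 < MC := lt_of_lt_of_le one_pos (le_max_right _ _)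
    have hCM : C ⊆ ball 0 MC := hMC₀.trans (ball_subset_ball (le_max_left _ _))
    have hnegC : -C ⊆ ball 0 MC := by
      intro x hx
      have := hCM (Set.mem_neg.mp hx)
      simp only [mem_ball, dist_zero_right] at this ⊢
      simpa using this
    -- facts about D = C - C
    have hDball : ball 0 δC ⊆ C - C := by
      intro z hz
      have hz1 : c₁ + z ∈ C := by
        apply hballC
        simpa [mem_ball, dist_self_add_left] using (by simpa [mem_ball, dist_zero_right] using hz :
          ‖z‖ < δC)
      have := Set.sub_mem_sub hz1 hc₁C
      simpa using this
    have hDM : C - C ⊆ ball 0 (2 * MC) := by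
      rintro x hx
      rcases Set.mem_sub.mp hx with ⟨a, ha, b, hb, rfl⟩
      have ha' : ‖a‖ < MC := by simpa [mem_ball, dist_zero_right] using hCM ha
      have hb' : ‖b‖ < MC := by simpa [mem_ball, dist_zero_right] using hCM hb
      simp only [mem_ball, dist_zero_right]
      calc ‖a - b‖ ≤ ‖a‖ + ‖b‖ := norm_sub_le a b
        _ < 2 * MC := by linarith
    -- basic positivity facts
    have hSne : {ρ : ℝ | 0 < ρ ∧ ∃ t : Fin n → ℝ, K ⊆ t +ᵥ ρ • C}.Nonempty :=
      ⟨2 * MK / δC, circ_set_nonempty hMK hδC hKM hballC⟩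
    have hSbdd : BddBelow {ρ : ℝ | 0 < ρ ∧ ∃ t : Fin n → ℝ, K ⊆ t +ᵥ ρ • C} :=
      ⟨δK / MC, circ_set_lb hn hMC hδK hballK hCM⟩
    have hS'ne : {ρ : ℝ | 0 < ρ ∧ ∃ t : Fin n → ℝ, K ⊆ t +ᵥ ρ • (C - C)}.Nonempty :=
      ⟨2 * MK / δC, circ_set_nonempty hMK hδC hKM hDball⟩
    have hS'lb := circ_set_lb hn (by positivity : (0:ℝ) < 2 * MC) hδK hballK hDM
    have hTbdd : BddAbove {ρ : ℝ | 0 ≤ ρ ∧ ∃ t : Fin n → ℝ, t +ᵥ ρ • C ⊆ K} :=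
      ⟨MK / δC, fun ρ hρ => in_set_bdd hn hMK hδC hballC hKM ρ hρ⟩
    have hT'bdd : BddAbove {ρ : ℝ | 0 ≤ ρ ∧ ∃ t : Fin n → ℝ, t +ᵥ ρ • (C - C) ⊆ K} :=
      ⟨MK / δC, fun ρ hρ => in_set_bdd hn hMK hδC hDball hKM ρ hρ⟩
    have hT'ne : {ρ : ℝ | 0 ≤ ρ ∧ ∃ t : Fin n → ℝ, t +ᵥ ρ • (C - C) ⊆ K}.Nonempty :=
      ⟨δK / (2 * (2 * MC)), in_set_pos (by positivity) hδK hballK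
        (hDM.trans (ball_subset_ball (by linarith)))⟩
    have hrpos : 0 < inrad K C := by
      have h0 : (0:ℝ) < δK / (2 * MC) := by positivity
      have h1 := le_csSup hTbdd (in_set_pos hMC hδK hballK hCM)
      rw [inrad]
      linarith
    have hR'pos : 0 < circR K (C - C) := by
      have h0 : (0:ℝ) < δK / (2 * MC) := by positivity
      have h1 := le_csInf hS'ne hS'lb
      rw [circR]
      linarith
    have hr'0 : 0 ≤ inrad K (C - C) := by
      have h0 : (0:ℝ) < δK / (2 * (2 * MC)) := by positivity
      have h1 := le_csSup hT'bdd
        (in_set_pos (by positivity : (0:ℝ) < 2 * MC) hδK hballK hDM)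
      rw [inrad]
      linarith
    have hAne : {σ : ℝ | 0 < σ ∧ ∃ t : Fin n → ℝ, -C ⊆ t +ᵥ σ • C}.Nonempty :=
      ⟨2 * MC / δC, circ_set_nonempty hMC hδC hnegC hballC⟩
    -- main estimate, for each admissible σ
    show circR K C * inrad K (C - C) / (inrad K C * circR K (C - C)) ≤
      sInf {σ : ℝ | 0 < σ ∧ ∃ t : Fin n → ℝ, -C ⊆ t +ᵥ σ • C}
    apply le_csInf hAne
    rintro σ ⟨hσ, t₀, ht₀⟩
    have h1σ : (0:ℝ) < 1 + σ := by linarith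
    -- (a)  R ≤ (1 + σ) R'
    have ha : circR K C ≤ (1 + σ) * circR K (C - C) := by
      have key : ∀ ρ ∈ {ρ : ℝ | 0 < ρ ∧ ∃ t : Fin n → ℝ, K ⊆ t +ᵥ ρ • (C - C)},
          (1 + σ) * ρ ∈ {ρ : ℝ | 0 < ρ ∧ ∃ t : Fin n → ℝ, K ⊆ t +ᵥ ρ • C} := by
        rintro ρ ⟨hρ, u, hu⟩
        refine ⟨mul_pos h1σ hρ, u + ρ • t₀, fun x hx => ?_⟩
        rcases Set.mem_vadd_set.mp (hu hx) with ⟨y, hy, rfl⟩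
        rcases Set.mem_smul_set.mp hy with ⟨d, hd, rfl⟩
        rcases Set.mem_sub.mp hd with ⟨a, haC, b, hbC, rfl⟩
        have hnb : -b ∈ t₀ +ᵥ σ • C := ht₀ (Set.neg_mem_neg.mpr hbC)
        rcases Set.mem_vadd_set.mp hnb with ⟨w, hw, hweq⟩
        rcases Set.mem_smul_set.mp hw with ⟨c₃, hc₃, rfl⟩
        simp only [vadd_eq_add] at hweq ⊢
        have hbeq : b = -t₀ - σ • c₃ := by
          linear_combination (norm := module) hweq
        have hcmem : (1 / (1 + σ)) • a + (σ / (1 + σ)) • c₃ ∈ C :=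
          hCconv haC hc₃ (by positivity) (by positivity) (by field_simp)
        refine Set.mem_vadd_set.mpr ⟨((1 + σ) * ρ) • ((1 / (1 + σ)) • a + (σ / (1 + σ)) • c₃),
          Set.smul_mem_smul_set hcmem, ?_⟩
        simp only [vadd_eq_add]
        rw [hbeq]
        match_scalars <;> (field_simp [h1σ.ne']; try ring)
      have h1 : ∀ ρ ∈ {ρ : ℝ | 0 < ρ ∧ ∃ t : Fin n → ℝ, K ⊆ t +ᵥ ρ • (C - C)},
          circR K C / (1 + σ) ≤ ρ := by
        intro ρ hρ
        rw [div_le_iff₀ h1σ]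
        have := csInf_le hSbdd (key ρ hρ)
        calc circR K C ≤ (1 + σ) * ρ := this
          _ = ρ * (1 + σ) := by ring
      have h2 : circR K C / (1 + σ) ≤ circR K (C - C) := le_csInf hS'ne h1
      rw [div_le_iff₀ h1σ] at h2
      linarith [h2]
    -- (b)  (1 + σ) r' ≤ σ r
    have hb : (1 + σ) * inrad K (C - C) ≤ σ * inrad K C := by
      have key : ∀ ρ' ∈ {ρ : ℝ | 0 ≤ ρ ∧ ∃ t : Fin n → ℝ, t +ᵥ ρ • (C - C) ⊆ K},
          ((1 + σ) / σ) * ρ' ∈ {ρ : ℝ | 0 ≤ ρ ∧ ∃ t : Fin n → ℝ, t +ᵥ ρ • C ⊆ K} := by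
        rintro ρ' ⟨hρ'0, t, ht⟩
        refine ⟨by positivity, t + (ρ' / σ) • t₀, fun y hy => ?_⟩
        rcases Set.mem_vadd_set.mp hy with ⟨z, hz, rfl⟩
        rcases Set.mem_smul_set.mp hz with ⟨c, hc, rfl⟩
        have hnc : -c ∈ t₀ +ᵥ σ • C := ht₀ (Set.neg_mem_neg.mpr hc)
        rcases Set.mem_vadd_set.mp hnc with ⟨w, hw, hweq⟩
        rcases Set.mem_smul_set.mp hw with ⟨c'', hc'', rfl⟩
        simp only [vadd_eq_add] at hweq ⊢
        have hd : c - c'' ∈ C - C := Set.sub_mem_sub hc hc''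
        have hmem : t + ρ' • (c - c'') ∈ K := by
          apply ht
          exact Set.mem_vadd_set.mpr ⟨ρ' • (c - c''), Set.smul_mem_smul_set hd, rfl⟩
        have hceq : c'' = σ⁻¹ • (-c - t₀) := by
          have h1 : σ • c'' = -c - t₀ := by
            linear_combination (norm := module) hweq
          rw [← h1, smul_smul, inv_mul_cancel₀ hσ.ne', one_smul]
        have heq : t + ρ' • (c - c'') = (t + (ρ' / σ) • t₀) + ((1 + σ) / σ * ρ') • c := by
          rw [hceq]
          match_scalars <;> (field_simp [hσ.ne', h1σ.ne']; try ring)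
        rw [← heq]
        exact hmem
      have h1 : ∀ ρ' ∈ {ρ : ℝ | 0 ≤ ρ ∧ ∃ t : Fin n → ℝ, t +ᵥ ρ • (C - C) ⊆ K},
          ρ' ≤ σ * inrad K C / (1 + σ) := by
        intro ρ' hρ'
        have h2 : (1 + σ) / σ * ρ' ≤ inrad K C := le_csSup hTbdd (key ρ' hρ')
        have hρ'0 : 0 ≤ ρ' := hρ'.1
        rw [le_div_iff₀ h1σ]
        have h4 := mul_le_mul_of_nonneg_right h2 hσ.le
        have h5 : (1 + σ) / σ * ρ' * σ = (1 + σ) * ρ' := by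
          field_simp
        rw [h5] at h4
        nlinarith [h4]
      have h3 : inrad K (C - C) ≤ σ * inrad K C / (1 + σ) := csSup_le hT'ne h1
      rw [le_div_iff₀ h1σ] at h3
      linarith [h3]
    -- combine
    rw [div_le_iff₀ (by positivity : (0:ℝ) < inrad K C * circR K (C - C))]
    have step1 : circR K C * inrad K (C - C) ≤
        ((1 + σ) * circR K (C - C)) * inrad K (C - C) :=
      mul_le_mul_of_nonneg_right ha hr'0
    have step2 : circR K (C - C) * ((1 + σ) * inrad K (C - C)) ≤
        circR K (C - C) * (σ * inrad K C) :=
      mul_le_mul_of_nonneg_left hb hR'pos.le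
    nlinarith [step1, step2]
end

section
/- For all convex bodies K, C in R^n, the generalized concentricity inequality holds: s(C)·r(K,C) + R(K,C) ≤ (1/2)(1+s(C))·D(K,C). -/
open Pointwise

namespace Conc

variable {n : ℕ}


/-- support functional value -/
noncomputable def sF (C : Set (Fin n → ℝ)) (f : (Fin n → ℝ) →L[ℝ] ℝ) : ℝ := sSup (f '' C)

lemma le_sF {C : Set (Fin n → ℝ)} (hC : IsCompact C) {f : (Fin n → ℝ) →L[ℝ] ℝ}
    {x : Fin n → ℝ} (hx : x ∈ C) : f x ≤ sF C f :=
  le_csSup ((hC.image f.continuous).bddAbove) ⟨x, hx, rfl⟩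

lemma sF_le {C : Set (Fin n → ℝ)} (hne : C.Nonempty) {f : (Fin n → ℝ) →L[ℝ] ℝ} {a : ℝ}
    (h : ∀ x ∈ C, f x ≤ a) : sF C f ≤ a :=
  csSup_le (hne.image f) (by rintro r ⟨x, hx, rfl⟩; exact h x hx)

lemma sF_exists_max {C : Set (Fin n → ℝ)} (hC : IsCompact C) (hne : C.Nonempty)
    (f : (Fin n → ℝ) →L[ℝ] ℝ) : ∃ x ∈ C, sF C f = f x ∧ ∀ y ∈ C, f y ≤ f x := by
  obtain ⟨x, hx, hmax⟩ := hC.exists_isMaxOn hne f.continuous.continuousOn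
  exact ⟨x, hx, le_antisymm (sF_le hne fun y hy => hmax hy) (le_sF hC hx), fun y hy => hmax hy⟩

lemma sF_mono {A B : Set (Fin n → ℝ)} (hAB : A ⊆ B) (hA : A.Nonempty) (hB : IsCompact B)
    (f : (Fin n → ℝ) →L[ℝ] ℝ) : sF A f ≤ sF B f :=
  sF_le hA fun x hx => le_sF hB (hAB hx)

lemma mem_vadd_smul {t : Fin n → ℝ} {ρ : ℝ} {C : Set (Fin n → ℝ)} {x : Fin n → ℝ} :
    x ∈ t +ᵥ ρ • C ↔ ∃ z ∈ C, x = t + ρ • z := by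
  constructor
  · rintro ⟨y, ⟨z, hz, rfl⟩, rfl⟩
    exact ⟨z, hz, rfl⟩
  · rintro ⟨z, hz, rfl⟩
    exact ⟨ρ • z, ⟨z, hz, rfl⟩, rfl⟩

lemma sF_vadd_smul {C : Set (Fin n → ℝ)} (hC : IsCompact C) (hne : C.Nonempty)
    {ρ : ℝ} (hρ : 0 ≤ ρ) (t : Fin n → ℝ) (f : (Fin n → ℝ) →L[ℝ] ℝ) :
    sF (t +ᵥ ρ • C) f = f t + ρ * sF C f := by
  obtain ⟨x, hx, hfx, hmax⟩ := sF_exists_max hC hne f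
  rw [hfx]
  apply le_antisymm
  · apply sF_le
    · exact ⟨t + ρ • x, mem_vadd_smul.2 ⟨x, hx, rfl⟩⟩
    · intro y hy
      obtain ⟨z, hz, rfl⟩ := mem_vadd_smul.1 hy
      simp only [map_add, f.map_smul, smul_eq_mul]
      have := hmax z hz
      nlinarith
  · have : t + ρ • x ∈ t +ᵥ ρ • C := mem_vadd_smul.2 ⟨x, hx, rfl⟩
    have h2 := le_sF (hC := ?_) (f := f) this
    · simpa [map_add, f.map_smul, smul_eq_mul] using h2
    · exact ((hC.smul ρ).vadd t)

lemma sF_smul_set {C : Set (Fin n → ℝ)} (hC : IsCompact C) (hne : C.Nonempty)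
    {ρ : ℝ} (hρ : 0 ≤ ρ) (f : (Fin n → ℝ) →L[ℝ] ℝ) :
    sF (ρ • C) f = ρ * sF C f := by
  have := sF_vadd_smul hC hne hρ 0 f
  simpa using this

lemma sF_smul_fn {C : Set (Fin n → ℝ)} (hC : IsCompact C) (hne : C.Nonempty)
    {a : ℝ} (ha : 0 ≤ a) (f : (Fin n → ℝ) →L[ℝ] ℝ) :
    sF C (a • f) = a * sF C f := by
  obtain ⟨x, hx, hfx, hmax⟩ := sF_exists_max hC hne f
  rw [hfx]
  apply le_antisymm
  · exact sF_le hne fun y hy => by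
      simp only [ContinuousLinearMap.smul_apply, smul_eq_mul]
      exact mul_le_mul_of_nonneg_left (hmax y hy) ha
  · have := le_sF hC (f := a • f) hx
    simpa using this

lemma sF_neg_set {C : Set (Fin n → ℝ)} (f : (Fin n → ℝ) →L[ℝ] ℝ) :
    sF (-C) f = sF C (-f) := by
  unfold sF
  congr 1
  ext r
  constructor
  · rintro ⟨x, hx, rfl⟩
    exact ⟨-x, hx, by simp⟩
  · rintro ⟨x, hx, rfl⟩
    exact ⟨-x, by simpa using hx, by simp⟩


/-- The circumradius candidate set. -/
def RSet (K C : Set (Fin n → ℝ)) : Set ℝ := {ρ : ℝ | 0 < ρ ∧ ∃ t : Fin n → ℝ, K ⊆ t +ᵥ ρ • C}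

lemma RSet_bddBelow (K C : Set (Fin n → ℝ)) : BddBelow (RSet K C) :=
  ⟨0, fun ρ hρ => hρ.1.le⟩

/-- Containment from support-function inequality (separation). -/
lemma subset_of_sF {K C : Set (Fin n → ℝ)} (hKc : IsCompact K) (hC : IsCompact C)
    (hCc : Convex ℝ C) (hCne : C.Nonempty) {ρ : ℝ} (hρ : 0 < ρ) {t : Fin n → ℝ}
    (h : ∀ f : (Fin n → ℝ) →L[ℝ] ℝ, sF K f ≤ f t + ρ * sF C f) : K ⊆ t +ᵥ ρ • C := by
  intro x hx
  by_contra hxB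
  have hBconv : Convex ℝ (t +ᵥ ρ • C) := (hCc.smul ρ).vadd t
  have hBcomp : IsCompact (t +ᵥ ρ • C) := (hC.smul ρ).vadd t
  obtain ⟨f, u, hfu, hux⟩ := geometric_hahn_banach_closed_point hBconv hBcomp.isClosed hxB
  have h1 : f x ≤ sF K f := le_sF hKc hx
  have h2 : sF (t +ᵥ ρ • C) f ≤ u := by
    apply sF_le ⟨t + ρ • hCne.choose, mem_vadd_smul.2 ⟨hCne.choose, hCne.choose_spec, rfl⟩⟩
    exact fun y hy => (hfu y hy).le
  rw [sF_vadd_smul hC hCne hρ.le] at h2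
  linarith [h f]

/-- RSet is nonempty for bounded K, C with interior point. -/
lemma RSet_nonempty {K C : Set (Fin n → ℝ)} (hK : IsCompact K)
    (hCi : (interior C).Nonempty) : (RSet K C).Nonempty := by
  obtain ⟨z, hz⟩ := hCi
  obtain ⟨ε, hε, hball⟩ := Metric.isOpen_iff.1 isOpen_interior z hz
  have hballC : Metric.ball z ε ⊆ C := hball.trans interior_subset
  obtain ⟨M, hM⟩ := hK.isBounded.subset_closedBall 0
  set ρ : ℝ := (|M| + 1) / ε with hρdef
  have hρ : 0 < ρ := by positivity
  refine ⟨ρ, hρ, -(ρ • z), fun x hx => ?_⟩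
  have : ρ • Metric.ball z ε = Metric.ball (ρ • z) (ρ * ε) := by
    rw [smul_ball (ne_of_gt hρ)]
    congr 1
    rw [Real.norm_of_nonneg hρ.le]
  refine mem_vadd_smul.2 ?_
  have hx' : x ∈ Metric.ball (0 : Fin n → ℝ) (ρ * ε) := by
    have : ρ * ε = |M| + 1 := by
      rw [hρdef, div_mul_cancel₀ _ (ne_of_gt hε)]
    rw [this]
    have := hM hx
    simp only [Metric.mem_closedBall] at this
    have h2 : M ≤ |M| := le_abs_self M
    simp only [Metric.mem_ball]
    linarith
  have hx2 : x + ρ • z ∈ Metric.ball (ρ • z) (ρ * ε) := by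
    simp only [Metric.mem_ball, dist_eq_norm]
    have h4 : x + ρ • z - ρ • z = x := by abel
    rw [h4]
    simpa [Metric.mem_ball, dist_eq_norm] using hx'
  rw [← this] at hx2
  obtain ⟨w, hw, hweq⟩ := hx2
  have h3 : ρ • w = x + ρ • z := hweq
  exact ⟨w, hballC hw, by rw [h3]; abel⟩

/-- positive lower bound for RSet when K has interior (n ≥ 1). -/
lemma RSet_lb {K C : Set (Fin n → ℝ)} (hn : 0 < n) (hKi : (interior K).Nonempty)
    (hC : IsCompact C) : ∃ m : ℝ, 0 < m ∧ ∀ ρ ∈ RSet K C, m ≤ ρ := by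
  obtain ⟨z, hz⟩ := hKi
  obtain ⟨ε, hε, hball⟩ := Metric.isOpen_iff.1 isOpen_interior z hz
  have hballK : Metric.ball z ε ⊆ K := hball.trans interior_subset
  obtain ⟨M, hM⟩ := hC.isBounded.subset_closedBall 0
  have hM0 : 0 ≤ |M| + 1 := by positivity
  refine ⟨ε / (2 * (|M| + 1)), by positivity, fun ρ hρ => ?_⟩
  obtain ⟨hρ0, t, ht⟩ := hρ
  -- unit vector
  haveI : Nonempty (Fin n) := ⟨⟨0, hn⟩⟩
  set u : Fin n → ℝ := fun _ => 1 with hu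
  have hunorm : ‖u‖ = 1 := by
    rw [hu, pi_norm_const]
    simp
  have key : ∀ w : Fin n → ℝ, w ∈ Metric.ball z ε → ‖w - t‖ ≤ ρ * (|M| + 1) := by
    intro w hw
    obtain ⟨c, hc, rfl⟩ := mem_vadd_smul.1 (ht (hballK hw))
    have hcn : ‖c‖ ≤ |M| + 1 := by
      have := hM hc
      simp only [Metric.mem_closedBall, dist_zero_right] at this
      have := le_abs_self M
      linarith
    have : t + ρ • c - t = ρ • c := by abel
    rw [this, norm_smul, Real.norm_of_nonneg hρ0.le]
    exact mul_le_mul_of_nonneg_left hcn hρ0.le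
  have h1 : z + (ε/2) • u ∈ Metric.ball z ε := by
    simp only [Metric.mem_ball, dist_eq_norm]
    have : z + (ε/2) • u - z = (ε/2) • u := by abel
    rw [this, norm_smul, hunorm, Real.norm_of_nonneg (by linarith)]
    linarith
  have h2 : z - (ε/2) • u ∈ Metric.ball z ε := by
    simp only [Metric.mem_ball, dist_eq_norm]
    have : z - (ε/2) • u - z = -((ε/2) • u) := by abel
    rw [this, norm_neg, norm_smul, hunorm, Real.norm_of_nonneg (by linarith)]
    linarith
  have k1 := key _ h1
  have k2 := key _ h2
  have : ‖(z + (ε/2) • u - t) - (z - (ε/2) • u - t)‖ ≤ 2 * (ρ * (|M| + 1)) := by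
    calc ‖(z + (ε/2) • u - t) - (z - (ε/2) • u - t)‖
        ≤ ‖z + (ε/2) • u - t‖ + ‖z - (ε/2) • u - t‖ := norm_sub_le _ _
      _ ≤ 2 * (ρ * (|M| + 1)) := by linarith
  have heq : (z + (ε/2) • u - t) - (z - (ε/2) • u - t) = ε • u := by
    rw [show (ε : ℝ) • u = (ε/2) • u + (ε/2) • u by rw [← add_smul]; ring_nf]
    abel
  rw [heq, norm_smul, hunorm, Real.norm_of_nonneg hε.le, mul_one] at this
  rw [div_le_iff₀ (by positivity)]
  linarith

lemma sF_zero {C : Set (Fin n → ℝ)} (hne : C.Nonempty) : sF C (0 : (Fin n → ℝ) →L[ℝ] ℝ) = 0 := by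
  unfold sF
  have : (0 : (Fin n → ℝ) →L[ℝ] ℝ) '' C = {0} := by
    ext r; simp only [Set.mem_image, ContinuousLinearMap.zero_apply, Set.mem_singleton_iff]
    constructor
    · rintro ⟨x, _, rfl⟩; rfl
    · rintro rfl; exact ⟨hne.choose, hne.choose_spec, rfl⟩
  rw [this, csSup_singleton]

lemma sF_cont {C : Set (Fin n → ℝ)} (hC : IsCompact C) (hne : C.Nonempty) :
    Continuous fun f : (Fin n → ℝ) →L[ℝ] ℝ => sF C f := by
  obtain ⟨M, hM⟩ := hC.isBounded.subset_closedBall 0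
  have hM' : ∀ x ∈ C, ‖x‖ ≤ |M| := fun x hx => by
    have := hM hx
    simp only [Metric.mem_closedBall, dist_zero_right] at this
    exact this.trans (le_abs_self M)
  have key : ∀ f g : (Fin n → ℝ) →L[ℝ] ℝ, sF C f - sF C g ≤ |M| * dist f g := by
    intro f g
    rw [sub_le_iff_le_add]
    apply sF_le hne
    intro x hx
    have h1 : f x = g x + (f - g) x := by simp
    have h2 : (f - g) x ≤ ‖f - g‖ * ‖x‖ := (le_abs_self _).trans ((f - g).le_opNorm x)
    have h3 : ‖f - g‖ * ‖x‖ ≤ ‖f - g‖ * |M| := by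
      apply mul_le_mul_of_nonneg_left (hM' x hx) (norm_nonneg _)
    have h4 := le_sF hC (f := g) hx
    rw [dist_eq_norm]
    linarith
  apply (LipschitzWith.of_dist_le_mul (K := Real.toNNReal |M|)
    (f := fun f : (Fin n → ℝ) →L[ℝ] ℝ => sF C f) ?_).continuous
  intro f g
  rw [Real.coe_toNNReal _ (abs_nonneg M), Real.dist_eq, abs_le]
  constructor
  · have := key g f
    rw [dist_comm g f] at this
    linarith
  · exact key f g

lemma width_pos {C : Set (Fin n → ℝ)} (hC : IsBody C) {f : (Fin n → ℝ) →L[ℝ] ℝ}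
    (hf : f ≠ 0) : 0 < sF C f + sF C (-f) := by
  obtain ⟨hCc, hCk, hCi⟩ := hC
  obtain ⟨z, hz⟩ := hCi
  obtain ⟨ε, hε, hball⟩ := Metric.isOpen_iff.1 isOpen_interior z hz
  have hballC : Metric.ball z ε ⊆ C := hball.trans interior_subset
  have hv : ∃ v : Fin n → ℝ, 0 < f v := by
    by_contra h
    push_neg at h
    apply hf
    ext v
    have h1 := h v
    have h2 := h (-v)
    simp only [map_neg] at h2
    simp only [ContinuousLinearMap.zero_apply]
    linarith
  obtain ⟨v, hv⟩ := hv
  set η : ℝ := ε / (2 * (‖v‖ + 1)) with hη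
  have hηpos : 0 < η := by positivity
  have hmem : ∀ (a : ℝ), |a| ≤ η → z + a • v ∈ C := by
    intro a ha
    apply hballC
    simp only [Metric.mem_ball, dist_eq_norm]
    have : z + a • v - z = a • v := by abel
    rw [this, norm_smul]
    have h1 : ‖a‖ * ‖v‖ ≤ η * (‖v‖ + 1) := by
      apply mul_le_mul (by rwa [Real.norm_eq_abs]) (by linarith) (norm_nonneg _) hηpos.le
    have h2 : η * (‖v‖ + 1) = ε / 2 := by
      rw [hη]; field_simp
    linarith
  have m1 : z + η • v ∈ C := hmem η (by rw [abs_of_pos hηpos])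
  have m2 : z + (-η) • v ∈ C := hmem (-η) (by rw [abs_neg, abs_of_pos hηpos])
  have l1 : f z + η * f v ≤ sF C f := by
    have := le_sF hCk (f := f) m1
    simpa [map_add, f.map_smul, smul_eq_mul] using this
  have l2 : -(f z) + η * f v ≤ sF C (-f) := by
    have := le_sF hCk (f := -f) m2
    simp only [ContinuousLinearMap.neg_apply, map_add, f.map_smul, smul_eq_mul] at this
    linarith
  nlinarith

lemma circR_attained {K C : Set (Fin n → ℝ)} (hKne : K.Nonempty) (hC : IsCompact C)
    (hne : (RSet K C).Nonempty) {m : ℝ} (hm : 0 < m) (hlb : ∀ ρ ∈ RSet K C, m ≤ ρ) :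
    0 < circR K C ∧ ∃ t : Fin n → ℝ, K ⊆ t +ᵥ (circR K C) • C := by
  have hbdd := RSet_bddBelow K C
  set R := circR K C with hR
  have hRsInf : R = sInf (RSet K C) := rfl
  have hRm : m ≤ R := le_csInf hne hlb
  have hRpos : 0 < R := lt_of_lt_of_le hm hRm
  refine ⟨hRpos, ?_⟩
  have hch : ∀ k : ℕ, ∃ ρ, ρ ∈ RSet K C ∧ ρ < R + 1/(k+1) := by
    intro k
    have : sInf (RSet K C) < R + 1/(k+1) := by
      rw [← hRsInf]; have : (0:ℝ) < 1/(k+1) := by positivity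
      linarith
    exact (csInf_lt_iff hbdd hne).1 this
  choose ρ hmem hlt using hch
  choose t ht using fun k => (hmem k).2
  have hρpos : ∀ k, 0 < ρ k := fun k => (hmem k).1
  have hρub : ∀ k, ρ k ≤ R + 1 := by
    intro k
    have h1 : (1:ℝ)/(k+1) ≤ 1 := by
      rw [div_le_one (by positivity)]; linarith [Nat.cast_nonneg (α := ℝ) k]
    linarith [hlt k]
  obtain ⟨M, hM⟩ := hC.isBounded.subset_closedBall 0
  have hMnn : ∀ x ∈ C, ‖x‖ ≤ |M| + 1 := fun x hx => by
    have := hM hx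
    simp only [Metric.mem_closedBall, dist_zero_right] at this
    linarith [le_abs_self M]
  obtain ⟨x₀, hx₀⟩ := hKne
  set B : ℝ := ‖x₀‖ + (R + 1) * (|M| + 1) with hB
  have htB : ∀ k, t k ∈ Metric.closedBall (0 : Fin n → ℝ) B := by
    intro k
    obtain ⟨c, hc, hceq⟩ := mem_vadd_smul.1 (ht k hx₀)
    have : t k = x₀ - ρ k • c := by rw [hceq]; abel
    rw [Metric.mem_closedBall, dist_zero_right, this]
    calc ‖x₀ - ρ k • c‖ ≤ ‖x₀‖ + ‖ρ k • c‖ := norm_sub_le _ _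
      _ ≤ ‖x₀‖ + (R + 1) * (|M| + 1) := by
          rw [norm_smul, Real.norm_of_nonneg (hρpos k).le]
          have := hMnn c hc
          have h0 : (0:ℝ) ≤ |M| + 1 := by positivity
          nlinarith [hρub k, (hρpos k).le]
  obtain ⟨tl, htl, φ, hφ, htend⟩ :=
    (isCompact_closedBall (0 : Fin n → ℝ) B).tendsto_subseq htB
  have hρtend : Filter.Tendsto (fun k => ρ (φ k)) Filter.atTop (nhds R) := by
    apply tendsto_of_tendsto_of_tendsto_of_le_of_le (g := fun _ : ℕ => R)
      (h := fun k : ℕ => R + 1/(k+1)) tendsto_const_nhds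
    · have h1 : Filter.Tendsto (fun k : ℕ => 1/((k:ℝ)+1)) Filter.atTop (nhds 0) :=
        tendsto_one_div_add_atTop_nhds_zero_nat
      have := Filter.Tendsto.add (tendsto_const_nhds (x := R) (f := Filter.atTop (α := ℕ))) h1
      simpa using this
    · exact fun k => csInf_le hbdd (hmem (φ k))
    · intro k
      have h1 : (1:ℝ)/(φ k + 1) ≤ 1/(k+1) := by
        apply one_div_le_one_div_of_le (by positivity)
        have h2 : k ≤ φ k := hφ.le_apply
        have h3 : (k:ℝ) ≤ (φ k : ℝ) := Nat.cast_le.2 h2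
        push_cast
        linarith
      linarith [hlt (φ k)]
  refine ⟨tl, fun x hx => ?_⟩
  have hck : ∀ k, (ρ (φ k))⁻¹ • (x - t (φ k)) ∈ C := by
    intro k
    obtain ⟨c, hc, hceq⟩ := mem_vadd_smul.1 (ht (φ k) hx)
    have : x - t (φ k) = ρ (φ k) • c := by rw [hceq]; abel
    rw [this, inv_smul_smul₀ (ne_of_gt (hρpos (φ k)))]
    exact hc
  have hctend : Filter.Tendsto (fun k => (ρ (φ k))⁻¹ • (x - t (φ k))) Filter.atTop
      (nhds (R⁻¹ • (x - tl))) := by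
    apply Filter.Tendsto.smul
    · exact hρtend.inv₀ (ne_of_gt hRpos)
    · exact Filter.Tendsto.sub tendsto_const_nhds htend
  have hmemC : R⁻¹ • (x - tl) ∈ C := hC.isClosed.mem_of_tendsto hctend
    (Filter.Eventually.of_forall hck)
  refine mem_vadd_smul.2 ⟨R⁻¹ • (x - tl), hmemC, ?_⟩
  rw [smul_inv_smul₀ (ne_of_gt hRpos)]
  abel

set_option maxHeartbeats 1000000 in
lemma touch {K C : Set (Fin n → ℝ)} (hn : 0 < n) (hKk : IsCompact K) (hKne : K.Nonempty)
    (hC : IsBody C) {c : Fin n → ℝ} (hcc : K ⊆ c +ᵥ (circR K C) • C) (hRpos : 0 < circR K C)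
    (p : Fin n → ℝ) :
    ∃ f : (Fin n → ℝ) →L[ℝ] ℝ, f ≠ 0 ∧ sF K f = f c + circR K C * sF C f ∧ f p ≤ f c := by
  obtain ⟨hCc, hCk, hCi⟩ := hC
  have hCne : C.Nonempty := hCi.mono interior_subset
  set R := circR K C with hRdef
  have hFnn : ∀ f : (Fin n → ℝ) →L[ℝ] ℝ, sF K f ≤ f c + R * sF C f := by
    intro f
    apply sF_le hKne
    intro x hx
    obtain ⟨z, hz, rfl⟩ := mem_vadd_smul.1 (hcc hx)
    simp only [map_add, f.map_smul, smul_eq_mul]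
    have := le_sF hCk (f := f) hz
    nlinarith
  by_contra hcon
  push_neg at hcon
  set F : ((Fin n → ℝ) →L[ℝ] ℝ) → ℝ := fun f => (f c + R * sF C f) - sF K f with hF
  set G : ((Fin n → ℝ) →L[ℝ] ℝ) → ℝ := fun f => f (p - c) with hG
  have hFcont : Continuous F := by
    apply Continuous.sub
    · exact ((ContinuousLinearMap.apply ℝ ℝ c).continuous).add
        (continuous_const.mul (sF_cont hCk hCne))
    · exact sF_cont hKk hKne
  have hGcont : Continuous G := (ContinuousLinearMap.apply ℝ ℝ (p - c)).continuous
  have hF0 : ∀ f, 0 ≤ F f := fun f => by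
    have := hFnn f; simp only [hF]; linarith
  -- sphere nonempty
  have hSne : (Metric.sphere (0 : (Fin n → ℝ) →L[ℝ] ℝ) 1).Nonempty := by
    set f₀ : (Fin n → ℝ) →L[ℝ] ℝ := ContinuousLinearMap.proj (⟨0, hn⟩ : Fin n) with hf₀
    have hf₀ne : f₀ ≠ 0 := by
      intro h
      have : f₀ (Pi.single (⟨0, hn⟩ : Fin n) 1) = 1 := by
        simp [hf₀, ContinuousLinearMap.proj_apply]
      rw [h] at this
      simp at this
    refine ⟨‖f₀‖⁻¹ • f₀, ?_⟩
    rw [mem_sphere_zero_iff_norm]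
    have h := norm_smul (‖f₀‖⁻¹) f₀
    rw [h, norm_inv, norm_norm]
    exact inv_mul_cancel₀ (norm_ne_zero_iff.2 hf₀ne)
  -- minimum of max F G on the sphere is positive
  obtain ⟨m, hmpos, hmmin⟩ : ∃ m, 0 < m ∧
      ∀ g : (Fin n → ℝ) →L[ℝ] ℝ, ‖g‖ = 1 → m ≤ max (F g) (G g) := by
    obtain ⟨fm, hfmS, hminOn⟩ := (isCompact_sphere (0 : (Fin n → ℝ) →L[ℝ] ℝ) 1).exists_isMinOn
      hSne ((hFcont.max hGcont).continuousOn)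
    refine ⟨max (F fm) (G fm), ?_, fun g hg => hminOn (mem_sphere_zero_iff_norm.2 hg)⟩
    have hfmne : fm ≠ 0 := by
      intro h
      rw [mem_sphere_zero_iff_norm, h] at hfmS
      simp at hfmS
    rcases lt_or_eq_of_le (hF0 fm) with h | h
    · exact lt_of_lt_of_le h (le_max_left _ _)
    · have htouch : sF K fm = fm c + R * sF C fm := by
        simp only [hF] at h; linarith
      have := hcon fm hfmne htouch
      have hGm : 0 < G fm := by simp only [hG, map_sub]; linarith
      exact lt_of_lt_of_le hGm (le_max_right _ _)
  -- bounds
  obtain ⟨MC, hMCpos, hsFCb⟩ : ∃ MC : ℝ, 0 < MC ∧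
      ∀ f : (Fin n → ℝ) →L[ℝ] ℝ, ‖f‖ = 1 → sF C f ≤ MC := by
    obtain ⟨M, hM⟩ := hCk.isBounded.subset_closedBall 0
    refine ⟨|M| + 1, by positivity, fun f hf => ?_⟩
    apply sF_le hCne
    intro x hx
    have h1 := hM hx
    simp only [Metric.mem_closedBall, dist_zero_right] at h1
    have h2 := le_abs_self M
    calc f x ≤ ‖f‖ * ‖x‖ := (le_abs_self _).trans (f.le_opNorm x)
      _ = ‖x‖ := by rw [hf, one_mul]
      _ ≤ |M| + 1 := by linarith
  obtain ⟨nd, hndnn, hGb⟩ : ∃ nd : ℝ, 0 ≤ nd ∧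
      ∀ f : (Fin n → ℝ) →L[ℝ] ℝ, ‖f‖ = 1 → |G f| ≤ nd := by
    refine ⟨‖p - c‖, norm_nonneg _, fun f hf => ?_⟩
    calc |G f| ≤ ‖f‖ * ‖p - c‖ := f.le_opNorm (p - c)
      _ = ‖p - c‖ := by rw [hf, one_mul]
  obtain ⟨ε, hεpos, hεnd⟩ : ∃ ε : ℝ, 0 < ε ∧ ε * nd ≤ m / 2 := by
    refine ⟨m / (2 * (nd + 1)), by positivity, ?_⟩
    rw [div_mul_eq_mul_div, div_le_div_iff₀ (by positivity) (by norm_num)]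
    nlinarith
  obtain ⟨δ, hδpos, hδR, hδ3, hδ4⟩ : ∃ δ : ℝ, 0 < δ ∧ δ ≤ R / 2 ∧
      δ * MC ≤ m / 2 ∧ δ * MC ≤ ε * m := by
    refine ⟨min (min (m / (2 * MC)) (ε * m / MC)) (R / 2),
      lt_min (lt_min (by positivity) (by positivity)) (by positivity), min_le_right _ _, ?_, ?_⟩
    · have h1 : min (min (m / (2 * MC)) (ε * m / MC)) (R / 2) ≤ m / (2 * MC) :=
        (min_le_left _ _).trans (min_le_left _ _)
      calc min (min (m / (2 * MC)) (ε * m / MC)) (R / 2) * MC ≤ (m / (2 * MC)) * MC :=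
            mul_le_mul_of_nonneg_right h1 hMCpos.le
        _ = m / 2 := by field_simp
    · have h1 : min (min (m / (2 * MC)) (ε * m / MC)) (R / 2) ≤ ε * m / MC :=
        (min_le_left _ _).trans (min_le_right _ _)
      calc min (min (m / (2 * MC)) (ε * m / MC)) (R / 2) * MC ≤ (ε * m / MC) * MC :=
            mul_le_mul_of_nonneg_right h1 hMCpos.le
        _ = ε * m := by field_simp
  -- key inequality on sphere
  have hsphere : ∀ g : (Fin n → ℝ) →L[ℝ] ℝ, ‖g‖ = 1 → δ * sF C g ≤ F g + ε * G g := by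
    intro g hg
    have hmg := hmmin g hg
    have hsC := hsFCb g hg
    have hGg := abs_le.1 (hGb g hg)
    have hδsF : δ * sF C g ≤ δ * MC := mul_le_mul_of_nonneg_left hsC hδpos.le
    rcases le_max_iff.1 hmg with h | h
    · have h1 : -(ε * nd) ≤ ε * G g := by nlinarith [hGg.1]
      linarith
    · have h1 : ε * m ≤ ε * G g := mul_le_mul_of_nonneg_left h hεpos.le
      have := hF0 g
      linarith
  -- extend to all functionals
  have hall : ∀ f : (Fin n → ℝ) →L[ℝ] ℝ,
      sF K f ≤ f (c + ε • (p - c)) + (R - δ) * sF C f := by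
    intro f
    by_cases hf0 : f = 0
    · rw [hf0]
      simp [sF_zero hKne, sF_zero hCne]
    · have hfn : (0:ℝ) < ‖f‖ := norm_pos_iff.2 hf0
      set g : (Fin n → ℝ) →L[ℝ] ℝ := ‖f‖⁻¹ • f with hg
      have hgnorm : ‖g‖ = 1 := by
        rw [hg]
        have h := norm_smul (‖f‖⁻¹) f
        rw [h, norm_inv, norm_norm]
        exact inv_mul_cancel₀ (ne_of_gt hfn)
      have hkey := hsphere g hgnorm
      have hfg : f = ‖f‖ • g := by
        rw [hg, smul_smul, mul_inv_cancel₀ (ne_of_gt hfn), one_smul]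
      have e1 : sF K f = ‖f‖ * sF K g := by
        conv_lhs => rw [hfg]
        exact sF_smul_fn hKk hKne (norm_nonneg f) g
      have e2 : sF C f = ‖f‖ * sF C g := by
        conv_lhs => rw [hfg]
        exact sF_smul_fn hCk hCne (norm_nonneg f) g
      have e3 : f (c + ε • (p - c)) = ‖f‖ * g (c + ε • (p - c)) := by
        conv_lhs => rw [hfg]
        simp
      rw [e1, e2, e3]
      have hgle : sF K g ≤ g (c + ε • (p - c)) + (R - δ) * sF C g := by
        have hFgdef : F g = (g c + R * sF C g) - sF K g := rfl
        have hGgdef : G g = g (p - c) := rfl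
        have h4 : g (c + ε • (p - c)) = g c + ε * g (p - c) := by
          simp [map_add, g.map_smul]
        rw [h4]
        rw [hFgdef, hGgdef] at hkey
        linarith
      calc ‖f‖ * sF K g ≤ ‖f‖ * (g (c + ε • (p - c)) + (R - δ) * sF C g) :=
            mul_le_mul_of_nonneg_left hgle hfn.le
        _ = ‖f‖ * g (c + ε • (p - c)) + (R - δ) * (‖f‖ * sF C g) := by ring
  have hRδpos : 0 < R - δ := by linarith
  have hsub : K ⊆ (c + ε • (p - c)) +ᵥ (R - δ) • C :=
    subset_of_sF hKk hCk hCc hCne hRδpos hall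
  have hmem : R - δ ∈ RSet K C := ⟨hRδpos, _, hsub⟩
  have : R ≤ R - δ := csInf_le (RSet_bddBelow K C) hmem
  linarith

lemma circR_eq (K C : Set (Fin n → ℝ)) : circR K C = sInf (RSet K C) := rfl

lemma exists_dual_ne_zero (hn : 0 < n) : ∃ f : (Fin n → ℝ) →L[ℝ] ℝ, f ≠ 0 := by
  refine ⟨ContinuousLinearMap.proj (⟨0, hn⟩ : Fin n), fun h => ?_⟩
  have : (ContinuousLinearMap.proj (⟨0, hn⟩ : Fin n) : (Fin n → ℝ) →L[ℝ] ℝ)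
      (Pi.single (⟨0, hn⟩ : Fin n) 1) = 1 := by
    simp [ContinuousLinearMap.proj_apply]
  rw [h] at this
  simp at this

-- set algebra
lemma smul_vadd_set (ρ : ℝ) (v : Fin n → ℝ) (C : Set (Fin n → ℝ)) :
    ρ • (v +ᵥ C) = (ρ • v) +ᵥ (ρ • C) := by
  ext x
  simp only [Set.mem_smul_set, Set.mem_vadd_set]
  constructor
  · rintro ⟨y, ⟨z, hz, rfl⟩, rfl⟩
    exact ⟨ρ • z, ⟨z, hz, rfl⟩, by simp [vadd_eq_add, smul_add]⟩
  · rintro ⟨y, ⟨z, hz, rfl⟩, rfl⟩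
    exact ⟨v + z, ⟨z, hz, rfl⟩, by simp [vadd_eq_add, smul_add]⟩

lemma vadd_vadd_set (t w : Fin n → ℝ) (A : Set (Fin n → ℝ)) :
    t +ᵥ (w +ᵥ A) = (t + w) +ᵥ A := by
  ext x
  simp only [Set.mem_vadd_set]
  constructor
  · rintro ⟨y, ⟨z, hz, rfl⟩, rfl⟩
    exact ⟨z, hz, by simp [vadd_eq_add]; abel⟩
  · rintro ⟨z, hz, rfl⟩
    exact ⟨w + z, ⟨z, hz, rfl⟩, by simp [vadd_eq_add]; abel⟩

lemma neg_vadd_set (v : Fin n → ℝ) (C : Set (Fin n → ℝ)) :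
    -(v +ᵥ C) = (-v) +ᵥ (-C) := by
  ext x
  simp only [Set.mem_neg, Set.mem_vadd_set]
  constructor
  · rintro ⟨z, hz, h⟩
    rw [vadd_eq_add] at h
    refine ⟨-z, by simpa using hz, ?_⟩
    rw [vadd_eq_add]
    have hx : x = -(v + z) := by rw [h, neg_neg]
    rw [hx]; abel
  · rintro ⟨z, hz, h⟩
    rw [vadd_eq_add] at h
    refine ⟨-z, hz, ?_⟩
    rw [vadd_eq_add, ← h]
    abel

lemma RSet_vadd_right (K C : Set (Fin n → ℝ)) (v : Fin n → ℝ) :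
    RSet K (v +ᵥ C) = RSet K C := by
  ext ρ
  simp only [RSet, Set.mem_setOf_eq]
  constructor
  · rintro ⟨hρ, t, ht⟩
    refine ⟨hρ, t + ρ • v, ?_⟩
    rwa [smul_vadd_set, vadd_vadd_set] at ht
  · rintro ⟨hρ, t, ht⟩
    refine ⟨hρ, t - ρ • v, ?_⟩
    rw [smul_vadd_set, vadd_vadd_set, sub_add_cancel]
    exact ht

lemma RSet_vadd_left (A C : Set (Fin n → ℝ)) (w : Fin n → ℝ) :
    RSet (w +ᵥ A) C = RSet A C := by
  ext ρ
  simp only [RSet, Set.mem_setOf_eq]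
  constructor
  · rintro ⟨hρ, t, ht⟩
    refine ⟨hρ, t - w, fun x hx => ?_⟩
    have : w + x ∈ t +ᵥ ρ • C := ht ⟨x, hx, rfl⟩
    obtain ⟨z, hz, hzeq⟩ := mem_vadd_smul.1 this
    exact mem_vadd_smul.2 ⟨z, hz, by rw [show x = -w + (w + x) by abel, hzeq]; abel⟩
  · rintro ⟨hρ, t, ht⟩
    refine ⟨hρ, t + w, ?_⟩
    rintro x ⟨y, hy, rfl⟩
    obtain ⟨z, hz, hzeq⟩ := mem_vadd_smul.1 (ht hy)
    refine mem_vadd_smul.2 ⟨z, hz, ?_⟩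
    show w + y = t + w + ρ • z
    rw [hzeq]; abel

lemma circR_vadd_right (K C : Set (Fin n → ℝ)) (v : Fin n → ℝ) :
    circR K (v +ᵥ C) = circR K C := by
  rw [circR_eq, circR_eq, RSet_vadd_right]

lemma circR_vadd_left (A C : Set (Fin n → ℝ)) (w : Fin n → ℝ) :
    circR (w +ᵥ A) C = circR A C := by
  rw [circR_eq, circR_eq, RSet_vadd_left]

lemma asym_vadd (C : Set (Fin n → ℝ)) (v : Fin n → ℝ) :
    asym (v +ᵥ C) = asym C := by
  unfold asym
  rw [neg_vadd_set, circR_vadd_left, circR_vadd_right]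

lemma inrad_vadd_right (K C : Set (Fin n → ℝ)) (v : Fin n → ℝ) :
    inrad K (v +ᵥ C) = inrad K C := by
  unfold inrad
  congr 1
  ext ρ
  simp only [Set.mem_setOf_eq]
  constructor
  · rintro ⟨hρ, t, ht⟩
    refine ⟨hρ, t + ρ • v, ?_⟩
    rwa [smul_vadd_set, vadd_vadd_set] at ht
  · rintro ⟨hρ, t, ht⟩
    refine ⟨hρ, t - ρ • v, ?_⟩
    rw [smul_vadd_set, vadd_vadd_set, sub_add_cancel]
    exact ht

lemma diamC_vadd_right (K C : Set (Fin n → ℝ)) (v : Fin n → ℝ) :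
    diamC K (v +ᵥ C) = diamC K C := by
  unfold diamC
  congr 1
  ext d
  simp only [Set.mem_setOf_eq]
  constructor
  · rintro ⟨x, hx, y, hy, rfl⟩
    exact ⟨x, hx, y, hy, by rw [circR_vadd_right]⟩
  · rintro ⟨x, hx, y, hy, rfl⟩
    exact ⟨x, hx, y, hy, by rw [circR_vadd_right]⟩

lemma asym_ge_one (hn : 0 < n) {C : Set (Fin n → ℝ)} (hC : IsBody C) : 1 ≤ asym C := by
  obtain ⟨f, hf⟩ := exists_dual_ne_zero hn
  have hCk := hC.2.1
  have hCne : C.Nonempty := hC.2.2.mono interior_subset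
  have hCnegne : (-C).Nonempty := by
    obtain ⟨x, hx⟩ := hCne
    exact ⟨-x, by simpa using hx⟩
  have hw := width_pos hC hf
  rw [asym, circR_eq]
  apply le_csInf (RSet_nonempty hC.2.1.neg hC.2.2)
  rintro ρ ⟨hρ, t, ht⟩
  have h1 : sF (-C) f ≤ f t + ρ * sF C f := by
    rw [← sF_vadd_smul hCk hCne hρ.le t f]
    exact sF_mono ht hCnegne ((hCk.smul ρ).vadd t) f
  have h2 : sF (-C) (-f) ≤ (-f) t + ρ * sF C (-f) := by
    rw [← sF_vadd_smul hCk hCne hρ.le t (-f)]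
    exact sF_mono ht hCnegne ((hCk.smul ρ).vadd t) (-f)
  rw [sF_neg_set] at h1 h2
  simp only [neg_neg, ContinuousLinearMap.neg_apply] at h1 h2
  nlinarith [hw]

def ISet (K C : Set (Fin n → ℝ)) : Set ℝ := {ρ : ℝ | 0 ≤ ρ ∧ ∃ t : Fin n → ℝ, t +ᵥ ρ • C ⊆ K}
def DSet (K C : Set (Fin n → ℝ)) : Set ℝ :=
  {d : ℝ | ∃ x ∈ K, ∃ y ∈ K, d = 2 * circR (segment ℝ x y) C}
lemma inrad_eq (K C : Set (Fin n → ℝ)) : inrad K C = sSup (ISet K C) := rfl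
lemma diamC_eq (K C : Set (Fin n → ℝ)) : diamC K C = sSup (DSet K C) := rfl

lemma RSet_anti {A B C : Set (Fin n → ℝ)} (hAB : A ⊆ B) : RSet B C ⊆ RSet A C := by
  rintro ρ ⟨hρ, t, ht⟩
  exact ⟨hρ, t, hAB.trans ht⟩

lemma circR_mono {A B C : Set (Fin n → ℝ)} (hAB : A ⊆ B) (hne : (RSet B C).Nonempty) :
    circR A C ≤ circR B C := by
  rw [circR_eq, circR_eq]
  exact csInf_le_csInf (RSet_bddBelow A C) hne (RSet_anti hAB)

lemma DSet_bddAbove {K C : Set (Fin n → ℝ)} (hKc : Convex ℝ K)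
    (hne : (RSet K C).Nonempty) : BddAbove (DSet K C) := by
  refine ⟨2 * circR K C, ?_⟩
  rintro d ⟨x, hx, y, hy, rfl⟩
  have := circR_mono (hKc.segment_subset hx hy) hne
  linarith

lemma circR_seg_ge {C : Set (Fin n → ℝ)} (hCk : IsCompact C) {x y : Fin n → ℝ}
    {f : (Fin n → ℝ) →L[ℝ] ℝ} (hw : 0 < sF C f + sF C (-f))
    (hne : (RSet (segment ℝ x y) C).Nonempty) :
    (f x - f y) / (sF C f + sF C (-f)) ≤ circR (segment ℝ x y) C := by
  rw [circR_eq]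
  apply le_csInf hne
  rintro ρ ⟨hρ, t, ht⟩
  rw [div_le_iff₀ hw]
  obtain ⟨z1, hz1, hxeq⟩ := mem_vadd_smul.1 (ht (left_mem_segment ℝ x y))
  obtain ⟨z2, hz2, hyeq⟩ := mem_vadd_smul.1 (ht (right_mem_segment ℝ x y))
  have h1 : f x ≤ f t + ρ * sF C f := by
    rw [hxeq]
    simp only [map_add, f.map_smul, smul_eq_mul]
    have := le_sF hCk (f := f) hz1
    nlinarith
  have h2 : -(f y) ≤ -(f t) + ρ * sF C (-f) := by
    rw [hyeq]
    simp only [map_add, f.map_smul, smul_eq_mul]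
    have := le_sF hCk (f := -f) hz2
    simp only [ContinuousLinearMap.neg_apply] at this
    nlinarith
  nlinarith

set_option maxHeartbeats 800000 in
lemma main_aux (hn : 0 < n) {K C : Set (Fin n → ℝ)} (hK : IsBody K) (hC : IsBody C)
    (hcan : -C ⊆ asym C • C) :
    asym C * inrad K C + circR K C ≤ 1 / 2 * (1 + asym C) * diamC K C := by
  obtain ⟨hKc, hKk, hKi⟩ := hK
  obtain ⟨hCc, hCk, hCi⟩ := hC
  have hKne : K.Nonempty := hKi.mono interior_subset
  have hCne : C.Nonempty := hCi.mono interior_subset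
  have hs1 : 1 ≤ asym C := asym_ge_one hn ⟨hCc, hCk, hCi⟩
  set s := asym C with hsdef
  have hs0 : (0:ℝ) < s := by linarith
  set R := circR K C with hRdef
  have hRSne : (RSet K C).Nonempty := RSet_nonempty hKk hCi
  obtain ⟨m, hm, hlb⟩ := RSet_lb hn hKi hCk
  obtain ⟨hRpos, c, hcc⟩ := circR_attained hKne hCk hRSne hm hlb
  set D := diamC K C with hDdef
  have hDbdd : BddAbove (DSet K C) := DSet_bddAbove hKc hRSne
  -- key inequality for each inradius candidate
  have key : ∀ ρ ∈ ISet K C, s * ρ + R ≤ 1 / 2 * (1 + s) * D := by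
    rintro ρ ⟨hρ0, t, ht⟩
    obtain ⟨f, hf0, htouch, hft⟩ := touch hn hKk hKne ⟨hCc, hCk, hCi⟩ hcc hRpos t
    set α := sF C f with hα
    set β := sF C (-f) with hβ
    have hw : 0 < α + β := width_pos ⟨hCc, hCk, hCi⟩ hf0
    have hβα : β ≤ s * α := by
      have h1 : sF (-C) f ≤ sF (s • C) f :=
        sF_mono hcan ⟨-hCne.choose, by simpa using hCne.choose_spec⟩ (hCk.smul s) f
      rw [sF_neg_set, sF_smul_set hCk hCne hs0.le] at h1
      exact h1
    have htρK : t +ᵥ ρ • C ⊆ K := ht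
    have hvne : (t +ᵥ ρ • C).Nonempty := ⟨t + ρ • hCne.choose,
      mem_vadd_smul.2 ⟨hCne.choose, hCne.choose_spec, rfl⟩⟩
    have hρR : ρ ≤ R := by
      have h1 : f t + ρ * α ≤ f c + R * α := by
        rw [← sF_vadd_smul hCk hCne hρ0 t f, ← sF_vadd_smul hCk hCne hRpos.le c f]
        exact (sF_mono htρK hvne hKk f).trans (sF_mono hcc hKne ((hCk.smul R).vadd c) f)
      have h2 : -(f t) + ρ * β ≤ -(f c) + R * β := by
        have := (sF_mono htρK hvne hKk (-f)).trans
          (sF_mono hcc hKne ((hCk.smul R).vadd c) (-f))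
        rw [sF_vadd_smul hCk hCne hρ0 t (-f), sF_vadd_smul hCk hCne hRpos.le c (-f)] at this
        simpa using this
      nlinarith
    obtain ⟨x, hxK, hfx, _⟩ := sF_exists_max hKk hKne f
    obtain ⟨w, hwC, hfw, _⟩ := sF_exists_max hCk hCne (-f)
    have hfweq : f w = -β := by
      have : β = -(f w) := by rw [hβ, hfw]; simp
      linarith
    set y := t + ρ • w with hy
    have hyK : y ∈ K := ht (mem_vadd_smul.2 ⟨w, hwC, rfl⟩)
    have hfy : f y = f t - ρ * β := by
      rw [hy]
      simp only [map_add, f.map_smul, smul_eq_mul, hfweq]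
      ring
    have hxy : R * α + ρ * β ≤ f x - f y := by
      rw [hfy, ← hfx, htouch]
      have := hft
      linarith
    have hsegne : (RSet (segment ℝ x y) C).Nonempty :=
      ⟨hRSne.choose, RSet_anti (hKc.segment_subset hxK hyK) hRSne.choose_spec⟩
    have hseg := circR_seg_ge hCk (x := x) (y := y) hw hsegne
    have hD : 2 * circR (segment ℝ x y) C ≤ D := by
      rw [hDdef, diamC_eq]
      exact le_csSup hDbdd ⟨x, hxK, y, hyK, rfl⟩
    have hfxy : (f x - f y) ≤ circR (segment ℝ x y) C * (α + β) := by
      rw [div_le_iff₀ hw] at hseg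
      exact hseg
    have hD2 : 2 * (R * α + ρ * β) ≤ D * (α + β) := by
      have h3 : 2 * circR (segment ℝ x y) C * (α + β) ≤ D * (α + β) :=
        mul_le_mul_of_nonneg_right hD hw.le
      nlinarith
    have h5 : (s * ρ + R) * (α + β) ≤ (1 + s) * (R * α + ρ * β) := by
      nlinarith [mul_nonneg (sub_nonneg.2 hρR) (sub_nonneg.2 hβα)]
    have h7 : (s * ρ + R) * (α + β) ≤ (1 / 2 * (1 + s) * D) * (α + β) := by
      nlinarith [mul_le_mul_of_nonneg_left hD2 (show (0:ℝ) ≤ 1/2*(1+s) by linarith)]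
    exact le_of_mul_le_mul_right h7 hw
  -- conclude via sSup
  have hISne : (ISet K C).Nonempty := by
    refine ⟨0, le_refl 0, hKne.choose, ?_⟩
    intro u hu
    obtain ⟨z, hz, rfl⟩ := mem_vadd_smul.1 hu
    rw [zero_smul, add_zero]
    exact hKne.choose_spec
  have hsup : inrad K C ≤ (1 / 2 * (1 + s) * D - R) / s := by
    rw [inrad_eq]
    apply csSup_le hISne
    intro ρ hρ
    rw [le_div_iff₀ hs0]
    have := key ρ hρ
    linarith
  have := mul_le_mul_of_nonneg_left hsup hs0.le
  rw [mul_div_cancel₀ _ (ne_of_gt hs0)] at this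
  linarith


lemma interior_neg_nonempty {C : Set (Fin n → ℝ)} (h : (interior C).Nonempty) :
    (interior (-C)).Nonempty := by
  obtain ⟨z, hz⟩ := h
  refine ⟨-z, ?_⟩
  have heq : interior (-C) = -(interior C) := by
    rw [← Set.image_neg_eq_neg, ← Set.image_neg_eq_neg]
    exact ((Homeomorph.neg (Fin n → ℝ)).image_interior C).symm
  rw [heq]
  exact Set.neg_mem_neg.2 hz

end Conc

open Conc in
theorem stmt6 {n : ℕ} (K C : Set (Fin n → ℝ)) (hK : IsBody K) (hC : IsBody C) :
    asym C * inrad K C + circR K C ≤ (1 / 2) * (1 + asym C) * diamC K C := by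
  rcases Nat.eq_zero_or_pos n with hn | hn
  · -- dimension 0 : everything degenerates
    subst hn
    haveI : Subsingleton (Fin 0 → ℝ) := ⟨fun a b => funext fun i => i.elim0⟩
    have hKne : K.Nonempty := hK.2.2.mono interior_subset
    have hCne : C.Nonempty := hC.2.2.mono interior_subset
    have hcirc : ∀ A B : Set (Fin 0 → ℝ), B.Nonempty → circR A B = 0 := by
      intro A B hB
      have hset : {ρ : ℝ | 0 < ρ ∧ ∃ t : Fin 0 → ℝ, A ⊆ t +ᵥ ρ • B} = Set.Ioi 0 := by
        ext ρ
        simp only [Set.mem_setOf_eq, Set.mem_Ioi]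
        constructor
        · exact fun h => h.1
        · intro h
          refine ⟨h, 0, ?_⟩
          have hne : ((0 : Fin 0 → ℝ) +ᵥ ρ • B).Nonempty :=
            ⟨0 + ρ • hB.choose, mem_vadd_smul.2 ⟨hB.choose, hB.choose_spec, rfl⟩⟩
          rw [hne.eq_univ]
          exact Set.subset_univ A
      rw [circR, hset, csInf_Ioi]
    have hasym : asym C = 0 := hcirc (-C) C hCne
    have hinr : inrad K C = 0 := by
      have hset : {ρ : ℝ | 0 ≤ ρ ∧ ∃ t : Fin 0 → ℝ, t +ᵥ ρ • C ⊆ K} = Set.Ici 0 := by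
        ext ρ
        simp only [Set.mem_setOf_eq, Set.mem_Ici]
        constructor
        · exact fun h => h.1
        · intro h
          refine ⟨h, 0, ?_⟩
          rw [hKne.eq_univ]
          exact Set.subset_univ _
      rw [inrad, hset, Real.sSup_of_not_bddAbove (not_bddAbove_Ici 0)]
    have hdiam : diamC K C = 0 := by
      have hset : {d : ℝ | ∃ x ∈ K, ∃ y ∈ K, d = 2 * circR (segment ℝ x y) C} = {0} := by
        ext d
        simp only [Set.mem_setOf_eq, Set.mem_singleton_iff]
        constructor
        · rintro ⟨x, hx, y, hy, rfl⟩
          rw [hcirc _ _ hCne]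
          ring
        · rintro rfl
          refine ⟨hKne.choose, hKne.choose_spec, hKne.choose, hKne.choose_spec, ?_⟩
          rw [hcirc _ _ hCne]
          ring
      rw [diamC, hset, csSup_singleton]
    rw [hasym, hinr, hdiam, hcirc K C hCne]
    norm_num
  · -- positive dimension
    have hCk := hC.2.1
    have hCi := hC.2.2
    have hnegCi : (interior (-C)).Nonempty := interior_neg_nonempty hCi
    have hnegCne : (-C).Nonempty := hnegCi.mono interior_subset
    have hRSne : (RSet (-C) C).Nonempty := RSet_nonempty hCk.neg hCi
    obtain ⟨m, hm, hlb⟩ := RSet_lb hn hnegCi hCk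
    obtain ⟨hspos, u, hu⟩ := circR_attained hnegCne hCk hRSne hm hlb
    have hs1 : 1 ≤ asym C := asym_ge_one hn hC
    set s := asym C with hsdef
    have hs1' : (1 : ℝ) + s ≠ 0 := by positivity
    set v : Fin n → ℝ := (1 + s)⁻¹ • u with hv
    set C' : Set (Fin n → ℝ) := v +ᵥ C with hC'def
    have hC' : IsBody C' := by
      refine ⟨hC.1.vadd v, hC.2.1.vadd v, ?_⟩
      rw [hC'def, interior_vadd]
      exact ⟨v + hCi.choose, Set.mem_vadd_set.2 ⟨hCi.choose, hCi.choose_spec, rfl⟩⟩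
    have hcan : -C' ⊆ asym C' • C' := by
      rw [hC'def, asym_vadd, ← hsdef, neg_vadd_set, smul_vadd_set]
      intro x hx
      obtain ⟨z, hz, rfl⟩ := Set.mem_vadd_set.1 hx
      have hz2 : z ∈ u +ᵥ s • C := hu hz
      obtain ⟨w, hw, rfl⟩ := mem_vadd_smul.1 hz2
      refine mem_vadd_smul.2 ⟨w, hw, ?_⟩
      show -v + (u + s • w) = s • v + s • w
      have huv : u = (1 + s) • v := by
        rw [hv, smul_smul, mul_inv_cancel₀ hs1', one_smul]
      rw [huv]
      rw [show ((1 : ℝ) + s) • v = v + s • v by rw [add_smul, one_smul]]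
      abel
    have hmain := main_aux hn hK hC' hcan
    rwa [hC'def, asym_vadd, inrad_vadd_right, circR_vadd_right, diamC_vadd_right] at hmain
end

section
/- For all convex bodies K, C in R^n, the mirrored concentricity inequality holds: r(K,−C) + R(K,C) ≤ (1/2)(1+s(C))·D(K,C). -/
open Pointwise

/-- Circumradius of a segment is the gauge of the difference body at the chord vector. -/
lemma circR_segment {n : ℕ} (C : Set (Fin n → ℝ)) (hC : Convex ℝ C) (x y : Fin n → ℝ) :
    circR (segment ℝ x y) C = gauge (C - C) (y - x) := by
  unfold circR gauge
  congr 1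
  ext ρ
  simp only [Set.mem_setOf_eq]
  constructor
  · rintro ⟨hρ, t, hsub⟩
    refine ⟨hρ, ?_⟩
    obtain ⟨a, ha, hax⟩ := Set.mem_vadd_set.mp (hsub (left_mem_segment ℝ x y))
    obtain ⟨b, hb, hby⟩ := Set.mem_vadd_set.mp (hsub (right_mem_segment ℝ x y))
    obtain ⟨c₁, hc₁, rfl⟩ := Set.mem_smul_set.mp ha
    obtain ⟨c₂, hc₂, rfl⟩ := Set.mem_smul_set.mp hb
    refine ⟨c₂ - c₁, Set.sub_mem_sub hc₂ hc₁, ?_⟩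
    simp only [vadd_eq_add] at hax hby
    show ρ • (c₂ - c₁) = y - x
    rw [smul_sub, ← hax, ← hby]; abel
  · rintro ⟨hρ, hmem⟩
    obtain ⟨d, hd, hdv⟩ := Set.mem_smul_set.mp hmem
    obtain ⟨c₁, hc₁, c₂, hc₂, rfl⟩ := Set.mem_sub.mp hd
    refine ⟨hρ, x - ρ • c₂, ?_⟩
    have hconv : Convex ℝ ((x - ρ • c₂) +ᵥ ρ • C) := (hC.smul ρ).vadd _
    apply hconv.segment_subset
    · exact Set.mem_vadd_set.mpr ⟨ρ • c₂, Set.smul_mem_smul_set hc₂, by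
        simp only [vadd_eq_add]; abel⟩
    · refine Set.mem_vadd_set.mpr ⟨ρ • c₁, Set.smul_mem_smul_set hc₁, ?_⟩
      simp only [vadd_eq_add]
      have : y = x + ρ • (c₁ - c₂) := by rw [hdv]; abel
      rw [this, smul_sub]; abel

/-- In dimension 0, every circumradius is 0. -/
lemma circR_zero_dim (A C : Set (Fin 0 → ℝ)) (hC : C.Nonempty) : circR A C = 0 := by
  unfold circR
  have : {ρ : ℝ | 0 < ρ ∧ ∃ t : Fin 0 → ℝ, A ⊆ t +ᵥ ρ • C} = Set.Ioi 0 := by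
    ext ρ
    simp only [Set.mem_setOf_eq, Set.mem_Ioi]
    refine ⟨fun h => h.1, fun h => ⟨h, 0, fun a _ => ?_⟩⟩
    obtain ⟨c, hc⟩ := hC
    exact Set.mem_vadd_set.mpr ⟨ρ • c, Set.smul_mem_smul_set hc, Subsingleton.elim _ _⟩
  rw [this, csInf_Ioi]

theorem stmt7 {n : ℕ} (K C : Set (Fin n → ℝ)) (hK : IsBody K) (hC : IsBody C) :
    inrad K (-C) + circR K C ≤ (1 / 2) * (1 + asym C) * diamC K C := by
  obtain ⟨hKconv, hKcomp, hKint⟩ := hK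
  obtain ⟨hCconv, hCcomp, hCint⟩ := hC
  have hKne : K.Nonempty := hKint.mono interior_subset
  have hCne : C.Nonempty := hCint.mono interior_subset
  rcases Nat.eq_zero_or_pos n with hn | hn
  · -- degenerate 0-dimensional case
    subst hn
    have hin : inrad K (-C) = 0 := by
      unfold inrad
      have hset : {ρ : ℝ | 0 ≤ ρ ∧ ∃ t : Fin 0 → ℝ, t +ᵥ ρ • (-C) ⊆ K} = Set.Ici 0 := by
        ext ρ
        simp only [Set.mem_setOf_eq, Set.mem_Ici]
        refine ⟨fun h => h.1, fun h => ⟨h, 0, fun a _ => ?_⟩⟩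
        obtain ⟨k, hk⟩ := hKne
        exact (Subsingleton.elim k a) ▸ hk
      rw [hset, Real.sSup_of_not_bddAbove (not_bddAbove_Ici 0)]
    have hasym : asym C = 0 := circR_zero_dim _ _ hCne
    have hD : diamC K C = 0 := by
      unfold diamC
      have hset : {d : ℝ | ∃ x ∈ K, ∃ y ∈ K, d = 2 * circR (segment ℝ x y) C} = {0} := by
        ext d
        simp only [Set.mem_setOf_eq, Set.mem_singleton_iff]
        constructor
        · rintro ⟨x, hx, y, hy, rfl⟩
          rw [circR_zero_dim _ _ hCne]; ring
        · rintro rfl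
          obtain ⟨k, hk⟩ := hKne
          exact ⟨k, hk, k, hk, by rw [circR_zero_dim _ _ hCne]; ring⟩
      rw [hset, csSup_singleton]
    rw [hin, hasym, hD, circR_zero_dim _ _ hCne]
    norm_num
  · -- main case: n ≥ 1
    -- The difference body B = C - C and its gauge
    set B := C - C with hBdef
    have hBconv : Convex ℝ B := hCconv.sub hCconv
    have hBcomp : IsCompact B := by
      rw [hBdef, sub_eq_add_neg]
      exact hCcomp.add hCcomp.neg
    have hBclosed : IsClosed B := hBcomp.isClosed
    have h0B : (0 : Fin n → ℝ) ∈ B := by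
      obtain ⟨c, hc⟩ := hCne
      show (0 : Fin n → ℝ) ∈ C - C
      exact sub_self c ▸ Set.sub_mem_sub hc hc
    have hBne : B.Nonempty := ⟨0, h0B⟩
    obtain ⟨ε, hε, hballB⟩ : ∃ ε > 0, Metric.ball (0 : Fin n → ℝ) ε ⊆ B := by
      obtain ⟨c₀, hc₀⟩ := hCint
      obtain ⟨ε, hε, hball⟩ := Metric.isOpen_iff.mp isOpen_interior c₀ hc₀
      refine ⟨ε, hε, fun v hv => ?_⟩
      have h1 : c₀ + v ∈ C := interior_subset (hball (by
        simp only [Metric.mem_ball, dist_eq_norm, add_sub_cancel_left]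
        simpa [dist_eq_norm] using hv))
      show v ∈ C - C
      exact add_sub_cancel_left c₀ v ▸ Set.sub_mem_sub h1 (interior_subset hc₀)
    have habs : Absorbent ℝ B :=
      absorbent_nhds_zero (Filter.mem_of_superset (Metric.ball_mem_nhds 0 hε) hballB)
    have hBbdd : Bornology.IsVonNBounded ℝ B :=
      NormedSpace.isVonNBounded_of_isBounded _ hBcomp.isBounded
    have hgauge0 : ∀ v : Fin n → ℝ, gauge B v = 0 ↔ v = 0 := fun v => gauge_eq_zero habs hBbdd
    have hsymB : ∀ b ∈ B, -b ∈ B := by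
      intro b hb
      obtain ⟨c₁, hc₁, c₂, hc₂, rfl⟩ := Set.mem_sub.mp hb
      exact Set.mem_sub.mpr ⟨c₂, hc₂, c₁, hc₁, by abel⟩
    have hmemg : ∀ μ : ℝ, 0 ≤ μ → ∀ v : Fin n → ℝ, gauge B v ≤ μ → v ∈ μ • B := by
      intro μ hμ v hv
      rcases eq_or_lt_of_le hμ with h | h
      · have hv0 : v = 0 := (hgauge0 v).mp (le_antisymm (h ▸ hv) (gauge_nonneg v))
        rw [hv0, ← h, Set.zero_smul_set hBne]
        exact Set.zero_mem_zero
      · have h1 : gauge B (μ⁻¹ • v) ≤ 1 := by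
          rw [gauge_smul_of_nonneg (inv_nonneg.mpr hμ), smul_eq_mul]
          calc μ⁻¹ * gauge B v ≤ μ⁻¹ * μ := by
                exact mul_le_mul_of_nonneg_left hv (inv_nonneg.mpr hμ)
            _ = 1 := inv_mul_cancel₀ h.ne'
        have h2 : μ⁻¹ • v ∈ B :=
          hBclosed.closure_eq ▸ mem_closure_of_gauge_le_one hBconv h0B habs h1
        exact ⟨μ⁻¹ • v, h2, smul_inv_smul₀ h.ne' v⟩
    have hgaugenorm : ∀ v : Fin n → ℝ, gauge B v ≤ 2 * ‖v‖ / ε := by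
      intro v
      rcases eq_or_ne v 0 with rfl | hv
      · simp only [gauge_zero, norm_zero]
        positivity
      · have hnv : 0 < ‖v‖ := norm_pos_iff.mpr hv
        apply gauge_le_of_mem (by positivity)
        refine ⟨(ε / (2 * ‖v‖)) • v, hballB ?_, ?_⟩
        · simp only [Metric.mem_ball, dist_zero_right, norm_smul, Real.norm_eq_abs]
          rw [abs_of_pos (by positivity)]
          rw [div_mul_eq_mul_div, mul_comm]
          rw [div_lt_iff₀ (by positivity)]
          nlinarith
        · show (2 * ‖v‖ / ε) • ((ε / (2 * ‖v‖)) • v) = v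
          rw [smul_smul]
          rw [show 2 * ‖v‖ / ε * (ε / (2 * ‖v‖)) = 1 by field_simp]
          rw [one_smul]
    -- two distinct points of K
    obtain ⟨a, haK⟩ := hKint
    obtain ⟨δ, hδ, hballK⟩ := Metric.isOpen_iff.mp isOpen_interior a haK
    obtain ⟨v₀, hv₀⟩ : ∃ v₀ : Fin n → ℝ, v₀ ≠ 0 :=
      ⟨fun _ => 1, fun h => by simpa using congrFun h ⟨0, hn⟩⟩
    have hnv₀ : 0 < ‖v₀‖ := norm_pos_iff.mpr hv₀
    set u₀ := (δ / (2 * ‖v₀‖)) • v₀ with hu₀def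
    have hu₀ne : u₀ ≠ 0 := by
      simp only [hu₀def, ne_eq, smul_eq_zero, not_or]
      exact ⟨by positivity, hv₀⟩
    have hu₀norm : ‖u₀‖ < δ := by
      simp only [hu₀def, norm_smul, Real.norm_eq_abs]
      rw [abs_of_pos (by positivity)]
      rw [div_mul_eq_mul_div, mul_comm]
      rw [div_lt_iff₀ (by positivity)]
      nlinarith
    have ha' : a ∈ K := interior_subset haK
    have hb' : a + u₀ ∈ K := interior_subset (hballK (by
      simp only [Metric.mem_ball, dist_eq_norm, add_sub_cancel_left]
      exact hu₀norm))
    -- diameter facts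
    obtain ⟨M, hM⟩ := hKcomp.isBounded.subset_closedBall 0
    have hDbdd : BddAbove {d : ℝ | ∃ x ∈ K, ∃ y ∈ K, d = 2 * circR (segment ℝ x y) C} := by
      refine ⟨2 * (2 * (2 * M) / ε), ?_⟩
      rintro d ⟨x, hx, y, hy, rfl⟩
      rw [circR_segment C hCconv]
      have h1 : gauge B (y - x) ≤ 2 * ‖y - x‖ / ε := hgaugenorm _
      have h2 : ‖y - x‖ ≤ 2 * M := by
        have hx' := hM hx
        have hy' := hM hy
        simp only [Metric.mem_closedBall, dist_zero_right] at hx' hy'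
        calc ‖y - x‖ ≤ ‖y‖ + ‖x‖ := norm_sub_le y x
          _ ≤ 2 * M := by linarith
      have h3 : 2 * ‖y - x‖ / ε ≤ 2 * (2 * M) / ε := by
        gcongr
      linarith
    have hD2 : ∀ x ∈ K, ∀ y ∈ K, 2 * gauge B (y - x) ≤ diamC K C := by
      intro x hx y hy
      exact le_csSup hDbdd ⟨x, hx, y, hy, by rw [circR_segment C hCconv]⟩
    have hDpos : 0 < diamC K C := by
      have hgu : gauge B u₀ ≠ 0 := fun h => hu₀ne ((hgauge0 u₀).mp h)
      have hgpos : 0 < gauge B u₀ := lt_of_le_of_ne (gauge_nonneg _) (Ne.symm hgu)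
      have := hD2 a ha' (a + u₀) hb'
      rw [add_sub_cancel_left] at this
      linarith
    -- the asymmetry set is nonempty
    set S := {ρ : ℝ | 0 < ρ ∧ ∃ t : Fin n → ℝ, -C ⊆ t +ᵥ ρ • C} with hSdef
    have hSne : S.Nonempty := by
      obtain ⟨MC, hMC⟩ := hCcomp.isBounded.subset_closedBall 0
      have hMC0 : 0 ≤ MC := by
        obtain ⟨c, hc⟩ := hCne
        have := hMC hc
        simp only [Metric.mem_closedBall, dist_zero_right] at this
        exact le_trans (norm_nonneg c) this
      obtain ⟨c₀, hc₀⟩ := hCint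
      obtain ⟨ε₂, hε₂, hball₂⟩ := Metric.isOpen_iff.mp isOpen_interior c₀ hc₀
      set ρ₁ := (MC + 1) / ε₂ with hρ₁def
      have hρ₁ : 0 < ρ₁ := by positivity
      refine ⟨ρ₁, hρ₁, -(ρ₁ • c₀), fun z hz => ?_⟩
      refine Set.mem_vadd_set.mpr ⟨z + ρ₁ • c₀, ?_, by simp only [vadd_eq_add]; abel⟩
      have hzn : ‖z‖ ≤ MC := by
        obtain ⟨c, hc, rfl⟩ : ∃ c ∈ C, -c = z := ⟨-z, Set.mem_neg.mp hz, neg_neg z⟩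
        have := hMC hc
        simp only [Metric.mem_closedBall, dist_zero_right] at this
        simpa using this
      have : z + ρ₁ • c₀ ∈ ρ₁ • Metric.ball c₀ ε₂ := by
        rw [smul_ball hρ₁.ne' c₀ ε₂]
        simp only [Metric.mem_ball, dist_eq_norm, add_sub_cancel_right, Real.norm_eq_abs,
          abs_of_pos hρ₁]
        have : ρ₁ * ε₂ = MC + 1 := by
          rw [hρ₁def]; field_simp
        rw [this]
        linarith
      exact Set.smul_set_mono (hball₂.trans interior_subset) this
    -- main estimate for each ρ in the asymmetry set
    have hmain : ∀ ρ ∈ S, inrad K (-C) + circR K C ≤ (1 + ρ) * (diamC K C / 2) := by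
      rintro ρ ⟨hρpos, t₀, ht₀⟩
      have hρ1 : (0:ℝ) < 1 + ρ := by linarith
      have hRKnn : 0 ≤ circR K C := Real.sInf_nonneg fun z hz => hz.1.le
      have hcand : ∀ r' ∈ {ρ' : ℝ | 0 ≤ ρ' ∧ ∃ t : Fin n → ℝ, t +ᵥ ρ' • (-C) ⊆ K},
          r' ≤ (1 + ρ) * (diamC K C / 2) - circR K C := by
        rintro r' ⟨hr'nn, u, hu⟩
        set lam := r' / (1 + ρ) with hlamdef
        have hlamnn : 0 ≤ lam := div_nonneg hr'nn hρ1.le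
        have hlamr : lam * (1 + ρ) = r' := div_mul_cancel₀ _ hρ1.ne'
        set w := u + lam • t₀ with hwdef
        have hwB : ∀ z ∈ lam • B, w + z ∈ K := by
          intro z hz
          obtain ⟨b, hb, rfl⟩ := Set.mem_smul_set.mp hz
          obtain ⟨c₁, hc₁, c₂, hc₂, rfl⟩ := Set.mem_sub.mp hb
          obtain ⟨e, he, hev⟩ := Set.mem_vadd_set.mp (ht₀ (Set.neg_mem_neg.mpr hc₁))
          obtain ⟨c₃, hc₃, rfl⟩ := Set.mem_smul_set.mp he
          simp only [vadd_eq_add] at hev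
          have hc₁' : c₁ = -t₀ - ρ • c₃ := by
            have := congrArg Neg.neg hev
            simp only [neg_neg, neg_add] at this
            rw [← this]; abel
          set c₄ := (ρ / (1 + ρ)) • c₃ + (1 / (1 + ρ)) • c₂ with hc₄def
          have hc₄C : c₄ ∈ C := hCconv hc₃ hc₂ (by positivity) (by positivity) (by field_simp <;> ring)
          apply hu
          refine Set.mem_vadd_set.mpr
            ⟨r' • (-c₄), Set.smul_mem_smul_set (Set.neg_mem_neg.mpr hc₄C), ?_⟩
          simp only [vadd_eq_add]
          rw [hc₁', hc₄def, hwdef, hlamdef]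
          match_scalars <;> field_simp <;> ring
        have hgK : ∀ x ∈ K, gauge B (x - w) ≤ diamC K C / 2 - lam := by
          intro x hx
          rcases eq_or_ne (gauge B (x - w)) 0 with hg0 | hg0
          · rw [hg0]
            rcases eq_or_lt_of_le hlamnn with h0 | h0
            · rw [← h0]
              linarith
            · have hgu : gauge B u₀ ≠ 0 := fun h => hu₀ne ((hgauge0 u₀).mp h)
              have hgupos : 0 < gauge B u₀ := lt_of_le_of_ne (gauge_nonneg _) (Ne.symm hgu)
              set b := (gauge B u₀)⁻¹ • u₀ with hbdef
              have hgb : gauge B b = 1 := by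
                rw [hbdef, gauge_smul_of_nonneg (inv_nonneg.mpr hgupos.le), smul_eq_mul,
                  inv_mul_cancel₀ hgu]
              have hbB : b ∈ B := by
                have := hmemg 1 zero_le_one b hgb.le
                simpa using this
              have hx₁ : w + lam • b ∈ K := hwB _ (Set.smul_mem_smul_set hbB)
              have hx₂ : w + lam • (-b) ∈ K := hwB _ (Set.smul_mem_smul_set (hsymB b hbB))
              have hDb := hD2 _ hx₂ _ hx₁
              rw [show (w + lam • b) - (w + lam • (-b)) = (2 * lam) • b by module] at hDb
              rw [gauge_smul_of_nonneg (by positivity), smul_eq_mul, hgb, mul_one] at hDb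
              linarith
          · have hgpos : 0 < gauge B (x - w) := lt_of_le_of_ne (gauge_nonneg _) (Ne.symm hg0)
            set gv := gauge B (x - w) with hgvdef
            set b := gv⁻¹ • (x - w) with hbdef
            have hgb : gauge B b = 1 := by
              rw [hbdef, gauge_smul_of_nonneg (inv_nonneg.mpr hgpos.le), smul_eq_mul, ← hgvdef,
                inv_mul_cancel₀ hgpos.ne']
            have hbB : b ∈ B := by
              have := hmemg 1 zero_le_one b hgb.le
              simpa using this
            have hq : w + lam • (-b) ∈ K := hwB _ (Set.smul_mem_smul_set (hsymB b hbB))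
            have hineq := hD2 _ hq x hx
            have hxq : x - (w + lam • (-b)) = (1 + lam * gv⁻¹) • (x - w) := by
              rw [hbdef]
              match_scalars <;> ring
            rw [hxq, gauge_smul_of_nonneg (by positivity), smul_eq_mul, ← hgvdef] at hineq
            have hexp : (1 + lam * gv⁻¹) * gv = gv + lam := by
              field_simp
            rw [hexp] at hineq
            linarith
        have hμnn : 0 ≤ diamC K C / 2 - lam := le_trans (gauge_nonneg _) (hgK a ha')
        set μ := diamC K C / 2 - lam with hμdef
        have hKsub : K ⊆ (w + μ • t₀) +ᵥ (μ * (1 + ρ)) • C := by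
          intro x hx
          obtain ⟨b, hb, hbv⟩ := Set.mem_smul_set.mp (hmemg _ hμnn _ (hgK x hx))
          obtain ⟨c₁, hc₁, c₂, hc₂, rfl⟩ := Set.mem_sub.mp hb
          obtain ⟨e, he, hev⟩ := Set.mem_vadd_set.mp (ht₀ (Set.neg_mem_neg.mpr hc₂))
          obtain ⟨c₃, hc₃, rfl⟩ := Set.mem_smul_set.mp he
          simp only [vadd_eq_add] at hev
          have hc₂' : c₂ = -t₀ - ρ • c₃ := by
            have := congrArg Neg.neg hev
            simp only [neg_neg, neg_add] at this
            rw [← this]; abel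
          set c₄ := (1 / (1 + ρ)) • c₁ + (ρ / (1 + ρ)) • c₃ with hc₄def
          have hc₄C : c₄ ∈ C := hCconv hc₁ hc₃ (by positivity) (by positivity) (by field_simp <;> ring)
          refine Set.mem_vadd_set.mpr ⟨(μ * (1 + ρ)) • c₄, Set.smul_mem_smul_set hc₄C, ?_⟩
          simp only [vadd_eq_add]
          -- hbv : μ • (c₁ - c₂) = x - w
          have hx' : x = w + μ • (c₁ - c₂) := by rw [hbv]; abel
          rw [hx', hc₂', hc₄def]
          match_scalars <;> field_simp <;> ring
        have hRK : circR K C ≤ μ * (1 + ρ) := by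
          rcases eq_or_lt_of_le (mul_nonneg hμnn hρ1.le) with h0 | h0
          · exfalso
            have hμ0 : μ = 0 := by
              rcases mul_eq_zero.mp h0.symm with h | h
              · exact h
              · exact absurd h hρ1.ne'
            have hxw : ∀ x ∈ K, x = w := by
              intro x hx
              have h1 := hgK x hx
              rw [hμ0] at h1
              have h2 := (hgauge0 (x - w)).mp (le_antisymm h1 (gauge_nonneg _))
              exact sub_eq_zero.mp h2
            have h1 := hxw a ha'
            have h2 := hxw (a + u₀) hb'
            apply hu₀ne
            have : a + u₀ = a := by rw [h2, ← h1]
            simpa using this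
          · exact csInf_le ⟨0, fun z hz => hz.1.le⟩ ⟨h0, _, hKsub⟩
        have hfin : μ * (1 + ρ) = (1 + ρ) * (diamC K C / 2) - r' := by
          rw [hμdef, ← hlamr]; ring
        rw [hfin] at hRK
        linarith
      have hne0 : (0:ℝ) ∈ {ρ' : ℝ | 0 ≤ ρ' ∧ ∃ t : Fin n → ℝ, t +ᵥ ρ' • (-C) ⊆ K} := by
        refine ⟨le_refl 0, a, ?_⟩
        rw [Set.zero_smul_set (hCne.neg)]
        intro z hz
        obtain ⟨b, hb, hbz⟩ := Set.mem_vadd_set.mp hz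
        simp only [Set.mem_zero] at hb  -- b = 0
        rw [← hbz, hb]
        simpa using ha'
      have hsup := csSup_le ⟨0, hne0⟩ hcand
      unfold inrad
      linarith
    -- assemble via the infimum defining the asymmetry
    have h1 : ∀ ρ ∈ S,
        (2 * (inrad K (-C) + circR K C) - diamC K C) / diamC K C ≤ ρ := by
      intro ρ hρ
      rw [div_le_iff₀ hDpos]
      have := hmain ρ hρ
      nlinarith
    have h2 : (2 * (inrad K (-C) + circR K C) - diamC K C) / diamC K C ≤ asym C :=
      le_csInf hSne h1
    have h3 : 2 * (inrad K (-C) + circR K C) - diamC K C ≤ asym C * diamC K C :=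
      (div_le_iff₀ hDpos).mp h2
    linarith only [h3]
end
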